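/- arXiv:2601.13952 — 9 statements merged into one kernel-verified Lean document; each statement's English description precedes it below -/
import Mathlib

section
/- Let n ≥ 1, let 1 ≤ a_1 < ⋯ < a_k ≤ n, let 1 ≤ i < j ≤ n, and let u ∈ S([n]^2) be the product of the k transpositions ((a_r,i),(a_r,j)) for r = 1,…,k. Then u is stable of rank 1 if and only if either {i,j} ⊆ {a_1,…,a_k} or {i,j} ∩ {a_1,…,a_k} = ∅. Moreover, for fixed k with 1 ≤ k ≤ n, the number of triples consisting of a k-element subset {a_1,…,a_k} of [n] and a 2-element subset {i,j} of [n] for which the resulting permutation u is stable of rank 1 equals C(n,k)·(C(n−k,2) + C(k,2)). -/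
/-- The permutation `u ⊗ 1` of `[n]³`, acting as `(x,y,z) ↦ (u(x,y), z)`. -/
def tensorOne {n : ℕ} (u : Equiv.Perm (Fin n × Fin n)) :
    Equiv.Perm (Fin n × Fin n × Fin n) :=
  (Equiv.prodAssoc (Fin n) (Fin n) (Fin n)).permCongr (u.prodCongr (Equiv.refl (Fin n)))

/-- The permutation `1 ⊗ u` of `[n]³`, acting as `(x,y,z) ↦ (x, u(y,z))`. -/
def oneTensor {n : ℕ} (u : Equiv.Perm (Fin n × Fin n)) :
    Equiv.Perm (Fin n × Fin n × Fin n) :=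
  (Equiv.refl (Fin n)).prodCongr u

/-- `u` is compatible with `v` if `(v ⊗ 1)(1 ⊗ u) = (1 ⊗ u)(v ⊗ 1)` in `S([n]³)`. -/
def Compatible {n : ℕ} (u v : Equiv.Perm (Fin n × Fin n)) : Prop :=
  tensorOne v * oneTensor u = oneTensor u * tensorOne v

/-- `u` is stable of rank 1: `(u ⊗ 1)(1 ⊗ u) = (1 ⊗ u)(u ⊗ 1)`. -/
def StableRank1 {n : ℕ} (u : Equiv.Perm (Fin n × Fin n)) : Prop :=
  Compatible u u


section Aux
variable {n : ℕ}

lemma apply_form (A : Finset (Fin n)) (i j : Fin n) (hij : i ≠ j)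
    (u : Equiv.Perm (Fin n × Fin n))
    (hu : ∀ p : Fin n × Fin n,
      u p = if p.1 ∈ A ∧ p.2 = i then (p.1, j)
            else if p.1 ∈ A ∧ p.2 = j then (p.1, i) else p) :
    ∀ x y : Fin n, u (x, y) = (x, if x ∈ A then Equiv.swap i j y else y) := by
  intro x y
  rw [hu (x, y)]
  by_cases hx : x ∈ A <;> by_cases h1 : y = i <;> by_cases h2 : y = j <;>
    simp_all [Equiv.swap_apply_def]

lemma stable_iff_cond (A : Finset (Fin n)) (i j : Fin n)
    (u : Equiv.Perm (Fin n × Fin n))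
    (hu' : ∀ x y : Fin n, u (x, y) = (x, if x ∈ A then Equiv.swap i j y else y)) :
    StableRank1 u ↔ ∀ x y z : Fin n,
      (if y ∈ A then Equiv.swap i j z else z) =
      (if (if x ∈ A then Equiv.swap i j y else y) ∈ A then Equiv.swap i j z else z) := by
  unfold StableRank1 Compatible
  rw [Equiv.ext_iff]
  constructor
  · intro h x y z
    have := h (x, y, z)
    simp only [Equiv.Perm.mul_apply, tensorOne, oneTensor, Equiv.permCongr_apply,
      Equiv.prodAssoc, Equiv.prodCongr_apply, Equiv.coe_fn_mk, Equiv.coe_fn_symm_mk,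
      Equiv.coe_refl, Prod.map, id] at this
    rw [hu' y z] at this
    dsimp only at this
    rw [hu' x y] at this
    dsimp only at this
    rw [hu' _ z] at this
    exact (Prod.ext_iff.mp ((Prod.ext_iff.mp this).2)).2
  · intro h p
    obtain ⟨x, y, z⟩ := p
    simp only [Equiv.Perm.mul_apply, tensorOne, oneTensor, Equiv.permCongr_apply,
      Equiv.prodAssoc, Equiv.prodCongr_apply, Equiv.coe_fn_mk, Equiv.coe_fn_symm_mk,
      Equiv.coe_refl, Prod.map, id]
    rw [hu' y z]
    dsimp only
    rw [hu' x y]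
    dsimp only
    rw [hu' _ z]
    exact Prod.ext rfl (Prod.ext rfl (h x y z))

lemma char (A : Finset (Fin n)) (hA : A.Nonempty) (i j : Fin n) (hij : i ≠ j)
    (u : Equiv.Perm (Fin n × Fin n))
    (hu : ∀ p : Fin n × Fin n,
      u p = if p.1 ∈ A ∧ p.2 = i then (p.1, j)
            else if p.1 ∈ A ∧ p.2 = j then (p.1, i) else p) :
    StableRank1 u ↔
      (({i, j} : Finset (Fin n)) ⊆ A ∨ Disjoint ({i, j} : Finset (Fin n)) A) := by
  have hu' := apply_form A i j hij u hu
  rw [stable_iff_cond A i j u hu']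
  have hset : (({i, j} : Finset (Fin n)) ⊆ A ∨ Disjoint ({i, j} : Finset (Fin n)) A)
      ↔ (i ∈ A ↔ j ∈ A) := by
    simp only [Finset.insert_subset_iff, Finset.singleton_subset_iff,
      Finset.disjoint_left, Finset.mem_insert, Finset.mem_singleton]
    constructor
    · rintro (⟨h1, h2⟩ | h)
      · exact iff_of_true h1 h2
      · exact iff_of_false (fun hi => h (Or.inl rfl) hi) (fun hj => h (Or.inr rfl) hj)
    · intro h
      by_cases hi : i ∈ A
      · exact Or.inl ⟨hi, h.mp hi⟩
      · refine Or.inr ?_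
        rintro a (rfl | rfl) ha
        · exact hi ha
        · exact hi (h.mpr ha)
  rw [hset]
  constructor
  · intro h
    obtain ⟨x₀, hx₀⟩ := hA
    have key := h x₀ i i
    by_cases hi : i ∈ A <;> by_cases hj : j ∈ A <;>
      simp_all [Equiv.swap_apply_left]
  · intro h x y z
    by_cases hx : x ∈ A
    · simp only [hx, if_true]
      congr 1
      by_cases h1 : y = i
      · subst h1; rw [Equiv.swap_apply_left]; simp [h]
      · by_cases h2 : y = j
        · subst h2; rw [Equiv.swap_apply_right]; simp [h]
        · rw [Equiv.swap_apply_of_ne_of_ne h1 h2]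
    · simp [hx]

end Aux

section Count
variable {n : ℕ}

def mkPerm (A : Finset (Fin n)) (i j : Fin n) : Equiv.Perm (Fin n × Fin n) :=
  Equiv.prodShear (Equiv.refl _) (fun x => if x ∈ A then Equiv.swap i j else Equiv.refl _)

lemma mkPerm_apply (A : Finset (Fin n)) (i j : Fin n) (hij : i ≠ j) :
    ∀ p : Fin n × Fin n,
      mkPerm A i j p = if p.1 ∈ A ∧ p.2 = i then (p.1, j)
            else if p.1 ∈ A ∧ p.2 = j then (p.1, i) else p := by
  rintro ⟨x, y⟩
  simp only [mkPerm, Equiv.prodShear]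
  by_cases hx : x ∈ A <;> by_cases h1 : y = i <;> by_cases h2 : y = j <;>
    simp_all [Equiv.swap_apply_def]

lemma set_eq (k : ℕ) (hk1 : 1 ≤ k) :
    {AB : Finset (Fin n) × Finset (Fin n) |
        AB.1.card = k ∧ AB.2.card = 2 ∧
        ∃ (i' j' : Fin n) (u' : Equiv.Perm (Fin n × Fin n)),
          i' ≠ j' ∧ AB.2 = {i', j'} ∧
          (∀ p : Fin n × Fin n,
            u' p = if p.1 ∈ AB.1 ∧ p.2 = i' then (p.1, j')
                   else if p.1 ∈ AB.1 ∧ p.2 = j' then (p.1, i') else p) ∧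
          StableRank1 u'} =
    ↑(Finset.univ.filter fun AB : Finset (Fin n) × Finset (Fin n) =>
        AB.1.card = k ∧ AB.2.card = 2 ∧ (AB.2 ⊆ AB.1 ∨ Disjoint AB.2 AB.1)) := by
  ext ⟨A, B⟩
  simp only [Set.mem_setOf_eq, Finset.coe_filter, Finset.mem_univ, true_and]
  constructor
  · rintro ⟨hA, hB, i', j', u', hne, hBeq, hu', hst⟩
    refine ⟨hA, hB, ?_⟩
    have hAne : A.Nonempty := Finset.card_pos.mp (by omega)
    rw [hBeq]
    exact (char A hAne i' j' hne u' hu').mp hst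
  · rintro ⟨hA, hB, hor⟩
    obtain ⟨i', j', hne, hBeq⟩ := Finset.card_eq_two.mp hB
    have hAne : A.Nonempty := Finset.card_pos.mp (by omega)
    refine ⟨hA, hB, i', j', mkPerm A i' j', hne, hBeq, mkPerm_apply A i' j' hne, ?_⟩
    exact (char A hAne i' j' hne (mkPerm A i' j') (mkPerm_apply A i' j' hne)).mpr
      (hBeq ▸ hor)

lemma compl_sub (A B : Finset (Fin n)) : B ⊆ Aᶜ ↔ Disjoint B A := by
  simp [Finset.subset_iff, Finset.disjoint_left]

lemma count (k : ℕ) (hk2 : k ≤ n) :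
    (Finset.univ.filter fun AB : Finset (Fin n) × Finset (Fin n) =>
        AB.1.card = k ∧ AB.2.card = 2 ∧ (AB.2 ⊆ AB.1 ∨ Disjoint AB.2 AB.1)).card =
      n.choose k * ((n - k).choose 2 + k.choose 2) := by
  rw [Finset.card_eq_sum_card_fiberwise (f := Prod.fst)
    (t := Finset.univ.powersetCard k)
    (fun AB hAB => by
      simp only [Finset.mem_coe, Finset.mem_filter] at hAB
      exact Finset.mem_powersetCard_univ.mpr hAB.2.1)]
  have hfiber : ∀ A ∈ Finset.univ.powersetCard k,
      ((Finset.univ.filter fun AB : Finset (Fin n) × Finset (Fin n) =>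
        AB.1.card = k ∧ AB.2.card = 2 ∧ (AB.2 ⊆ AB.1 ∨ Disjoint AB.2 AB.1)).filter
        (fun a => a.1 = A)).card = (n - k).choose 2 + k.choose 2 := by
    intro A hAmem
    have hAcard : A.card = k := (Finset.mem_powersetCard_univ.mp hAmem)
    have himg : ((Finset.univ.filter fun AB : Finset (Fin n) × Finset (Fin n) =>
        AB.1.card = k ∧ AB.2.card = 2 ∧ (AB.2 ⊆ AB.1 ∨ Disjoint AB.2 AB.1)).filter
        (fun a => a.1 = A)) =
        ((Aᶜ.powersetCard 2) ∪ (A.powersetCard 2)).image (fun B => (A, B)) := by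
      ext ⟨A', B⟩
      simp only [Finset.mem_filter, Finset.mem_univ, true_and, Finset.mem_image,
        Finset.mem_union, Finset.mem_powersetCard, Prod.mk.injEq]
      constructor
      · rintro ⟨⟨h1, h2, h3⟩, rfl⟩
        exact ⟨B, by rcases h3 with h | h
                     · exact Or.inr ⟨h, h2⟩
                     · exact Or.inl ⟨(compl_sub A' B).mpr h, h2⟩, rfl, rfl⟩
      · rintro ⟨B', hB', rfl, rfl⟩
        rcases hB' with ⟨hs, hc⟩ | ⟨hs, hc⟩
        · exact ⟨⟨hAcard, hc, Or.inr ((compl_sub A B').mp hs)⟩, rfl⟩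
        · exact ⟨⟨hAcard, hc, Or.inl hs⟩, rfl⟩
    rw [himg, Finset.card_image_of_injective _ (fun b1 b2 h => (Prod.ext_iff.mp h).2),
      Finset.card_union_of_disjoint, Finset.card_powersetCard, Finset.card_powersetCard,
      Finset.card_compl, Fintype.card_fin, hAcard]
    · rw [Finset.disjoint_left]
      intro B h1 h2
      rw [Finset.mem_powersetCard] at h1 h2
      obtain ⟨x, hx⟩ := Finset.card_pos.mp (h1.2 ▸ (by norm_num : 0 < 2))
      exact (Finset.mem_compl.mp (h1.1 hx)) (h2.1 hx)
  rw [Finset.sum_congr rfl hfiber, Finset.sum_const, smul_eq_mul,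
    Finset.card_powersetCard, Finset.card_univ, Fintype.card_fin]

end Count

theorem stmt_2 (n k : ℕ) (hn : 1 ≤ n) (hk1 : 1 ≤ k) (hk2 : k ≤ n)
    (A : Finset (Fin n)) (hA : A.Nonempty) (hAcard : A.card = k)
    (i j : Fin n) (hij : i ≠ j)
    (u : Equiv.Perm (Fin n × Fin n))
    (hu : ∀ p : Fin n × Fin n,
      u p = if p.1 ∈ A ∧ p.2 = i then (p.1, j)
            else if p.1 ∈ A ∧ p.2 = j then (p.1, i) else p) :
    (StableRank1 u ↔
      (({i, j} : Finset (Fin n)) ⊆ A ∨ Disjoint ({i, j} : Finset (Fin n)) A)) ∧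
    Set.ncard {AB : Finset (Fin n) × Finset (Fin n) |
        AB.1.card = k ∧ AB.2.card = 2 ∧
        ∃ (i' j' : Fin n) (u' : Equiv.Perm (Fin n × Fin n)),
          i' ≠ j' ∧ AB.2 = {i', j'} ∧
          (∀ p : Fin n × Fin n,
            u' p = if p.1 ∈ AB.1 ∧ p.2 = i' then (p.1, j')
                   else if p.1 ∈ AB.1 ∧ p.2 = j' then (p.1, i') else p) ∧
          StableRank1 u'} =
      n.choose k * ((n - k).choose 2 + k.choose 2) := by
  refine ⟨char A hA i j hij u hu, ?_⟩
  rw [set_eq k hk1, Set.ncard_coe_finset, count k hk2]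
end

section
/- Let n ≥ 1, let {a_1,a_2}, {i_1,j_1}, {i_2,j_2} be 2-element subsets of [n] with |{i_1,j_1} ∩ {i_2,j_2}| ≤ 1, let v ∈ S([n]^2), and let u ∈ S([n]^2) be the product of the two transpositions ((a_1,i_1),(a_1,j_1)) and ((a_2,i_2),(a_2,j_2)). Then u is compatible with v if and only if v maps [n] × {a_1} onto itself and [n] × {a_2} onto itself. -/
section
variable {n : ℕ} (a1 a2 i1 j1 i2 j2 : Fin n)

def sig (y z : Fin n) : Fin n :=
  if y = a1 then Equiv.swap i1 j1 z else if y = a2 then Equiv.swap i2 j2 z else z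

lemma swap_pair_apply (a i j y z : Fin n) :
    Equiv.swap (a, i) (a, j) (y, z) = (y, if y = a then Equiv.swap i j z else z) := by
  rcases eq_or_ne y a with rfl | hy
  · simp only [Equiv.swap_apply_def, Prod.mk.injEq, if_pos rfl]
    split_ifs <;> simp_all
  · simp [Equiv.swap_apply_def, Prod.ext_iff, hy]

variable {a1 a2 i1 j1 i2 j2}

lemma u_apply (ha : a1 ≠ a2) (y z : Fin n) :
    (Equiv.swap (a1, i1) (a1, j1) * Equiv.swap (a2, i2) (a2, j2)) (y, z)
      = (y, sig a1 a2 i1 j1 i2 j2 y z) := by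
  rw [Equiv.Perm.mul_apply, swap_pair_apply, swap_pair_apply, sig]
  rcases eq_or_ne y a1 with rfl | hy1 <;> simp_all [ha]

variable (ha : a1 ≠ a2) (h1 : i1 ≠ j1) (h2 : i2 ≠ j2)
    (hw : ∀ w : Fin n, ¬ (Equiv.swap i1 j1 w = Equiv.swap i2 j2 w ∧ Equiv.swap i1 j1 w ≠ w))

include ha h1 hw in
lemma aux1 {b c : Fin n} (h : ∀ z, sig a1 a2 i1 j1 i2 j2 b z = sig a1 a2 i1 j1 i2 j2 c z)
    (hb : b = a1) : c = a1 := by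
  by_contra hc
  by_cases hc2 : c = a2
  · have hi := h i1
    simp [sig, hb, hc, hc2, ha.symm] at hi
    exact hw i1 ⟨by simp [hi], by simpa using h1.symm⟩
  · have := h i1
    simp [sig, hb, hc, hc2] at this
    exact h1 this.symm

include ha h2 hw in
lemma aux2 {b c : Fin n} (h : ∀ z, sig a1 a2 i1 j1 i2 j2 b z = sig a1 a2 i1 j1 i2 j2 c z)
    (hb : b = a2) : c = a2 := by
  have hb1 : b ≠ a1 := by rw [hb]; exact ha.symm
  by_contra hc
  by_cases hc1 : c = a1
  · have hi := h i2
    simp [sig, hb, hb1, hc1, ha, ha.symm] at hi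
    exact hw i2 ⟨by simp [← hi], by rw [← hi]; simpa using h2.symm⟩
  · have := h i2
    simp [sig, hb, hb1, hc1, hc, ha.symm] at this
    exact h2 this.symm

include ha h1 h2 hw in
lemma sig_iff {b c : Fin n} :
    (∀ z, sig a1 a2 i1 j1 i2 j2 b z = sig a1 a2 i1 j1 i2 j2 c z)
      ↔ ((b = a1 ↔ c = a1) ∧ (b = a2 ↔ c = a2)) := by
  constructor
  · intro h
    have h' : ∀ z, sig a1 a2 i1 j1 i2 j2 c z = sig a1 a2 i1 j1 i2 j2 b z := fun z => (h z).symm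
    exact ⟨⟨fun hb => aux1 ha h1 hw h hb, fun hcc => aux1 ha h1 hw h' hcc⟩,
           ⟨fun hb => aux2 ha h2 hw h hb, fun hcc => aux2 ha h2 hw h' hcc⟩⟩
  · rintro ⟨e1, e2⟩ z
    by_cases hb1 : b = a1
    · simp [sig, hb1, e1.mp hb1]
    · have hc1 : ¬ c = a1 := fun h => hb1 (e1.mpr h)
      by_cases hb2 : b = a2
      · simp [sig, hb1, hb2, e2.mp hb2, hc1]
      · have hc2 : ¬ c = a2 := fun h => hb2 (e2.mpr h)
        simp [sig, hb1, hb2, hc1, hc2]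

end

lemma img_iff {α : Type*} (v : Equiv.Perm α) (S : Set α) :
    ⇑v '' S = S ↔ ∀ p, v p ∈ S ↔ p ∈ S := by
  constructor
  · intro h p
    constructor
    · intro hp
      rw [← h] at hp
      obtain ⟨q, hq, he⟩ := hp
      rwa [← v.injective he]
    · intro hp
      rw [← h]; exact ⟨p, hp, rfl⟩
  · intro h
    ext q
    constructor
    · rintro ⟨p, hp, rfl⟩; exact (h p).mpr hp
    · intro hq
      exact ⟨v.symm q, (h _).mp (by simpa), by simp⟩

theorem stmt_3 (n : ℕ) (hn : 1 ≤ n) (a1 a2 i1 j1 i2 j2 : Fin n)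
    (ha : a1 ≠ a2) (h1 : i1 ≠ j1) (h2 : i2 ≠ j2)
    (hint : (({i1, j1} ∩ {i2, j2} : Finset (Fin n))).card ≤ 1)
    (v : Equiv.Perm (Fin n × Fin n)) :
    Compatible (Equiv.swap (a1, i1) (a1, j1) * Equiv.swap (a2, i2) (a2, j2)) v ↔
      (⇑v '' {p : Fin n × Fin n | p.2 = a1} = {p : Fin n × Fin n | p.2 = a1} ∧
       ⇑v '' {p : Fin n × Fin n | p.2 = a2} = {p : Fin n × Fin n | p.2 = a2}) := by
  -- the key disagreement fact
  have hw : ∀ w : Fin n, ¬ (Equiv.swap i1 j1 w = Equiv.swap i2 j2 w ∧ Equiv.swap i1 j1 w ≠ w) := by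
    rintro w ⟨heq, hne⟩
    have hw1 : w = i1 ∨ w = j1 := (Equiv.swap_apply_ne_self_iff.mp hne).2
    have hne2 : Equiv.swap i2 j2 w ≠ w := heq ▸ hne
    have hw2 : w = i2 ∨ w = j2 := (Equiv.swap_apply_ne_self_iff.mp hne2).2
    have hs1 : Equiv.swap i1 j1 w = i1 ∨ Equiv.swap i1 j1 w = j1 := by
      rcases hw1 with rfl | rfl <;> simp
    have hs2 : Equiv.swap i1 j1 w = i2 ∨ Equiv.swap i1 j1 w = j2 := by
      rw [heq]; rcases hw2 with rfl | rfl <;> simp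
    have hsub : ({w, Equiv.swap i1 j1 w} : Finset (Fin n)) ⊆ {i1, j1} ∩ {i2, j2} := by
      intro x hx
      simp only [Finset.mem_insert, Finset.mem_singleton] at hx
      rcases hx with rfl | rfl <;>
        simp only [Finset.mem_inter, Finset.mem_insert, Finset.mem_singleton] <;>
        tauto
    have := Finset.card_le_card hsub
    rw [Finset.card_pair (Ne.symm hne)] at this
    omega
  -- reduce Compatible to a pointwise statement
  have compat : Compatible (Equiv.swap (a1, i1) (a1, j1) * Equiv.swap (a2, i2) (a2, j2)) v ↔
      ∀ (x y : Fin n), ∀ z, sig a1 a2 i1 j1 i2 j2 y z = sig a1 a2 i1 j1 i2 j2 ((v (x, y)).2) z := by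
    unfold Compatible
    rw [Equiv.ext_iff]
    constructor
    · intro h x y z
      have := h (x, y, z)
      rw [Equiv.Perm.mul_apply, Equiv.Perm.mul_apply] at this
      rw [show oneTensor (Equiv.swap (a1, i1) (a1, j1) * Equiv.swap (a2, i2) (a2, j2)) (x,y,z)
            = (x, y, sig a1 a2 i1 j1 i2 j2 y z) by simp [oneTensor]; exact u_apply ha _ _] at this
      rw [show tensorOne v (x, y, z) = ((v (x,y)).1, (v (x,y)).2, z) by simp [tensorOne]] at this
      rw [show tensorOne v (x, y, sig a1 a2 i1 j1 i2 j2 y z)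
            = ((v (x,y)).1, (v (x,y)).2, sig a1 a2 i1 j1 i2 j2 y z) by simp [tensorOne]] at this
      rw [show oneTensor (Equiv.swap (a1, i1) (a1, j1) * Equiv.swap (a2, i2) (a2, j2))
            ((v (x,y)).1, (v (x,y)).2, z)
            = ((v (x,y)).1, (v (x,y)).2, sig a1 a2 i1 j1 i2 j2 ((v (x,y)).2) z) by
          simp [oneTensor]; exact u_apply ha _ _] at this
      exact (Prod.ext_iff.mp (Prod.ext_iff.mp this).2).2
    · intro h p
      obtain ⟨x, y, z⟩ := p
      rw [Equiv.Perm.mul_apply, Equiv.Perm.mul_apply]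
      rw [show oneTensor (Equiv.swap (a1, i1) (a1, j1) * Equiv.swap (a2, i2) (a2, j2)) (x,y,z)
            = (x, y, sig a1 a2 i1 j1 i2 j2 y z) by simp [oneTensor]; exact u_apply ha _ _]
      rw [show tensorOne v (x, y, z) = ((v (x,y)).1, (v (x,y)).2, z) by simp [tensorOne]]
      rw [show tensorOne v (x, y, sig a1 a2 i1 j1 i2 j2 y z)
            = ((v (x,y)).1, (v (x,y)).2, sig a1 a2 i1 j1 i2 j2 y z) by simp [tensorOne]]
      rw [show oneTensor (Equiv.swap (a1, i1) (a1, j1) * Equiv.swap (a2, i2) (a2, j2))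
            ((v (x,y)).1, (v (x,y)).2, z)
            = ((v (x,y)).1, (v (x,y)).2, sig a1 a2 i1 j1 i2 j2 ((v (x,y)).2) z) by
          simp [oneTensor]; exact u_apply ha _ _]
      exact Prod.ext rfl (Prod.ext rfl (h x y z))
  rw [compat, img_iff, img_iff]
  simp only [Set.mem_setOf_eq]
  constructor
  · intro h
    constructor
    · rintro ⟨x, y⟩
      exact ((sig_iff ha h1 h2 hw).mp (h x y)).1.symm
    · rintro ⟨x, y⟩
      exact ((sig_iff ha h1 h2 hw).mp (h x y)).2.symm
  · rintro ⟨e1, e2⟩ x y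
    exact (sig_iff ha h1 h2 hw).mpr ⟨(e1 (x, y)).symm, (e2 (x, y)).symm⟩
end

section
/- Let n ≥ 1, let {a_1,a_2}, {i_1,j_1}, {i_2,j_2} be 2-element subsets of [n] with |{i_1,j_1} ∩ {i_2,j_2}| ≤ 1, and let u ∈ S([n]^2) be the product of the two transpositions ((a_1,i_1),(a_1,j_1)) and ((a_2,i_2),(a_2,j_2)). Then u is stable of rank 1 if and only if {a_1,a_2} ∩ {i_1,j_1,i_2,j_2} = ∅. -/
theorem stmt_4 (n : ℕ) (hn : 1 ≤ n) (a1 a2 i1 j1 i2 j2 : Fin n)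
    (ha : a1 ≠ a2) (h1 : i1 ≠ j1) (h2 : i2 ≠ j2)
    (hint : (({i1, j1} ∩ {i2, j2} : Finset (Fin n))).card ≤ 1) :
    StableRank1 (Equiv.swap (a1, i1) (a1, j1) * Equiv.swap (a2, i2) (a2, j2)) ↔
      ({a1, a2} : Finset (Fin n)) ∩ {i1, j1, i2, j2} = ∅ := by
  classical
  set U := Equiv.swap (a1, i1) (a1, j1) * Equiv.swap (a2, i2) (a2, j2) with hU
  set f : Fin n → Equiv.Perm (Fin n) := fun x =>
    if x = a1 then Equiv.swap i1 j1 else if x = a2 then Equiv.swap i2 j2 else 1 with hf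
  have hfa1 : f a1 = Equiv.swap i1 j1 := by simp [hf]
  have hfa2 : f a2 = Equiv.swap i2 j2 := by simp [hf, Ne.symm ha]
  have hfo : ∀ x, x ≠ a1 → x ≠ a2 → f x = 1 := by
    intro x hx1 hx2; simp [hf, hx1, hx2]
  have hu : ∀ x y : Fin n, U (x, y) = (x, f x y) := by
    intro x y
    simp only [hU, hf, Equiv.Perm.mul_apply, Equiv.swap_apply_def, Prod.mk.injEq]
    split_ifs <;> simp_all [Equiv.swap_apply_of_ne_of_ne]
  have ht : ∀ (v : Equiv.Perm (Fin n × Fin n)) (x y z : Fin n),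
      tensorOne v (x, y, z) = ((v (x, y)).1, (v (x, y)).2, z) := by
    intro v x y z
    simp [tensorOne, Equiv.prodAssoc]
  have ho : ∀ (v : Equiv.Perm (Fin n × Fin n)) (x y z : Fin n),
      oneTensor v (x, y, z) = (x, v (y, z)) := by
    intro v x y z
    simp [oneTensor]
  -- Step 1: StableRank1 U ↔ ∀ x y, f (f x y) = f y
  have hcomm : StableRank1 U ↔ ∀ x y : Fin n, f (f x y) = f y := by
    unfold StableRank1 Compatible
    rw [Equiv.ext_iff]
    constructor
    · intro h x y
      refine Equiv.ext fun z => ?_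
      have h3 := h (x, y, z)
      simp only [Equiv.Perm.mul_apply, ht, ho, hu, Prod.mk.injEq] at h3
      exact h3.2.2.symm
    · rintro h ⟨x, y, z⟩
      simp only [Equiv.Perm.mul_apply, ht, ho, hu]
      rw [h]
  -- Step 2: translate the Finset condition
  have hmem : (({a1, a2} : Finset (Fin n)) ∩ {i1, j1, i2, j2} = ∅) ↔
      (a1 ≠ i1 ∧ a1 ≠ j1 ∧ a1 ≠ i2 ∧ a1 ≠ j2) ∧
        (a2 ≠ i1 ∧ a2 ≠ j1 ∧ a2 ≠ i2 ∧ a2 ≠ j2) := by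
    simp [Finset.eq_empty_iff_forall_notMem, Finset.mem_inter]
  -- helper facts
  have hsub : ¬((i1 = i2 ∨ i1 = j2) ∧ (j1 = i2 ∨ j1 = j2)) := by
    rintro ⟨hi, hj⟩
    have hss : ({i1, j1} : Finset (Fin n)) ⊆ {i2, j2} := by
      intro x hx
      simp only [Finset.mem_insert, Finset.mem_singleton] at hx ⊢
      rcases hx with rfl | rfl
      · exact hi
      · exact hj
    rw [Finset.inter_eq_left.mpr hss, Finset.card_pair h1] at hint
    omega
  have hswne : Equiv.swap i1 j1 ≠ Equiv.swap i2 j2 := by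
    intro e
    apply hsub
    constructor
    · have hmove : Equiv.swap i2 j2 i1 ≠ i1 := by
        rw [← e, Equiv.swap_apply_left]; exact Ne.symm h1
      exact (Equiv.swap_apply_ne_self_iff.mp hmove).2
    · have hmove : Equiv.swap i2 j2 j1 ≠ j1 := by
        rw [← e, Equiv.swap_apply_right]; exact h1
      exact (Equiv.swap_apply_ne_self_iff.mp hmove).2
  have hsw1 : Equiv.swap i1 j1 ≠ 1 := fun e => h1 (Equiv.swap_eq_one_iff.mp e)
  have hsw2 : Equiv.swap i2 j2 ≠ 1 := fun e => h2 (Equiv.swap_eq_one_iff.mp e)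
  rw [hcomm, hmem]
  constructor
  · -- condition → disjointness
    intro h
    -- generic evaluation of f at a value different from a1 and possibly a2
    have fval : ∀ y : Fin n, y ≠ a1 → f y = 1 ∨ f y = Equiv.swap i2 j2 := by
      intro y hy
      by_cases hy2 : y = a2
      · right; rw [hy2, hfa2]
      · left; exact hfo y hy hy2
    have fval' : ∀ y : Fin n, y ≠ a2 → f y = 1 ∨ f y = Equiv.swap i1 j1 := by
      intro y hy
      by_cases hy1 : y = a1
      · right; rw [hy1, hfa1]
      · left; exact hfo y hy1 hy
    refine ⟨⟨?_, ?_, ?_, ?_⟩, ?_, ?_, ?_, ?_⟩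
    · -- a1 ≠ i1
      intro e
      have hc := h a1 j1
      rw [hfa1, Equiv.swap_apply_right, ← e, hfa1] at hc
      rcases fval j1 (fun hj => h1 (hj.trans e).symm) with hv | hv <;>
        rw [hv] at hc
      · exact hsw1 hc
      · exact hswne hc
    · -- a1 ≠ j1
      intro e
      have hc := h a1 i1
      rw [hfa1, Equiv.swap_apply_left, ← e, hfa1] at hc
      rcases fval i1 (fun hj => h1 (hj.trans e)) with hv | hv <;>
        rw [hv] at hc
      · exact hsw1 hc
      · exact hswne hc
    · -- a1 ≠ i2
      intro e
      have hc := h a2 j2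
      rw [hfa2, Equiv.swap_apply_right, ← e, hfa1] at hc
      rcases fval j2 (fun hj => h2 (hj.trans e).symm) with hv | hv <;>
        rw [hv] at hc
      · exact hsw1 hc
      · exact hswne hc
    · -- a1 ≠ j2
      intro e
      have hc := h a2 i2
      rw [hfa2, Equiv.swap_apply_left, ← e, hfa1] at hc
      rcases fval i2 (fun hj => h2 (hj.trans e)) with hv | hv <;>
        rw [hv] at hc
      · exact hsw1 hc
      · exact hswne hc
    · -- a2 ≠ i1
      intro e
      have hc := h a1 j1
      rw [hfa1, Equiv.swap_apply_right, ← e, hfa2] at hc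
      rcases fval' j1 (fun hj => h1 (hj.trans e).symm) with hv | hv <;>
        rw [hv] at hc
      · exact hsw2 hc
      · exact hswne hc.symm
    · -- a2 ≠ j1
      intro e
      have hc := h a1 i1
      rw [hfa1, Equiv.swap_apply_left, ← e, hfa2] at hc
      rcases fval' i1 (fun hj => h1 (hj.trans e)) with hv | hv <;>
        rw [hv] at hc
      · exact hsw2 hc
      · exact hswne hc.symm
    · -- a2 ≠ i2
      intro e
      have hc := h a2 j2
      rw [hfa2, Equiv.swap_apply_right, ← e, hfa2] at hc
      rcases fval' j2 (fun hj => h2 (hj.trans e).symm) with hv | hv <;>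
        rw [hv] at hc
      · exact hsw2 hc
      · exact hswne hc.symm
    · -- a2 ≠ j2
      intro e
      have hc := h a2 i2
      rw [hfa2, Equiv.swap_apply_left, ← e, hfa2] at hc
      rcases fval' i2 (fun hj => h2 (hj.trans e)) with hv | hv <;>
        rw [hv] at hc
      · exact hsw2 hc
      · exact hswne hc.symm
  · -- disjointness → condition
    rintro ⟨⟨hA1, hA2, hA3, hA4⟩, hB1, hB2, hB3, hB4⟩ x y
    by_cases hx1 : x = a1
    · rw [hx1, hfa1]
      by_cases hy1 : y = i1
      · rw [hy1, Equiv.swap_apply_left, hfo j1 (Ne.symm hA2) (Ne.symm hB2),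
          hfo i1 (Ne.symm hA1) (Ne.symm hB1)]
      · by_cases hy2 : y = j1
        · rw [hy2, Equiv.swap_apply_right, hfo i1 (Ne.symm hA1) (Ne.symm hB1),
            hfo j1 (Ne.symm hA2) (Ne.symm hB2)]
        · rw [Equiv.swap_apply_of_ne_of_ne hy1 hy2]
    · by_cases hx2 : x = a2
      · rw [hx2, hfa2]
        by_cases hy1 : y = i2
        · rw [hy1, Equiv.swap_apply_left, hfo j2 (Ne.symm hA4) (Ne.symm hB4),
            hfo i2 (Ne.symm hA3) (Ne.symm hB3)]
        · by_cases hy2 : y = j2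
          · rw [hy2, Equiv.swap_apply_right, hfo i2 (Ne.symm hA3) (Ne.symm hB3),
              hfo j2 (Ne.symm hA4) (Ne.symm hB4)]
          · rw [Equiv.swap_apply_of_ne_of_ne hy1 hy2]
      · rw [hfo x hx1 hx2, Equiv.Perm.one_apply]
end

section
/- Let n ≥ 1, let (a_1,i_1), (a_1,j_1), (a_2,i_2), (a_2,j_2) be four distinct points of [n]² with a_1 ≠ a_2, and let u ∈ S([n]^2) be the product of the two transpositions ((a_1,i_1),(a_1,j_1)) and ((a_2,i_2),(a_2,j_2)). Then u is stable of rank 1 if and only if either {a_1,a_2} ∩ {i_1,j_1,i_2,j_2} = ∅ or {a_1,a_2} = {i_1,j_1,i_2,j_2}. Moreover, the number of such permutations u (i.e. products of two transpositions on four distinct points of [n]² of this form, taken over all choices of a_1 ≠ a_2 and column indices) that are stable of rank 1 equals C(n,2)·(C(n−2,2)² + 1). -/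
def shear {n : ℕ} (σ : Fin n → Equiv.Perm (Fin n)) : Equiv.Perm (Fin n × Fin n) where
  toFun p := (p.1, σ p.1 p.2)
  invFun p := (p.1, (σ p.1).symm p.2)
  left_inv p := by simp
  right_inv p := by simp

@[simp] lemma shear_apply {n : ℕ} (σ : Fin n → Equiv.Perm (Fin n)) (p : Fin n × Fin n) :
    shear σ p = (p.1, σ p.1 p.2) := rfl

lemma shear_mul {n : ℕ} (σ τ : Fin n → Equiv.Perm (Fin n)) :
    shear σ * shear τ = shear (fun x => σ x * τ x) := by
  ext p <;> simp [Equiv.Perm.mul_apply]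

lemma shear_inj {n : ℕ} {σ τ : Fin n → Equiv.Perm (Fin n)}
    (h : shear σ = shear τ) : σ = τ := by
  funext x
  apply Equiv.ext
  intro y
  have := congrArg (fun u => (u (x, y)).2) h
  simpa using this

lemma tensorOne_shear_apply {n : ℕ} (σ : Fin n → Equiv.Perm (Fin n)) (x y z : Fin n) :
    tensorOne (shear σ) (x, y, z) = (x, σ x y, z) := rfl

lemma oneTensor_shear_apply {n : ℕ} (σ : Fin n → Equiv.Perm (Fin n)) (x y z : Fin n) :
    oneTensor (shear σ) (x, y, z) = (x, y, σ y z) := rfl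

lemma stable_shear {n : ℕ} (σ : Fin n → Equiv.Perm (Fin n)) :
    StableRank1 (shear σ) ↔ ∀ x y, σ (σ x y) = σ y := by
  have key : ∀ x y z, (tensorOne (shear σ) * oneTensor (shear σ)) (x, y, z) = (x, σ x y, σ y z) := by
    intro x y z
    rfl
  have key2 : ∀ x y z, (oneTensor (shear σ) * tensorOne (shear σ)) (x, y, z) = (x, σ x y, σ (σ x y) z) := by
    intro x y z
    rfl
  constructor
  · intro h x y
    apply Equiv.ext
    intro z
    have h2 := congrArg (fun u => (u (x, y, z)).2.2) h
    simp only [key, key2] at h2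
    exact h2.symm
  · intro h
    apply Equiv.ext
    rintro ⟨x, y, z⟩
    rw [key, key2, h x y]

lemma swap_row {n : ℕ} (a i j : Fin n) :
    Equiv.swap (a, i) (a, j) = shear (fun x => if x = a then Equiv.swap i j else 1) := by
  ext ⟨x, y⟩
  · by_cases hx : x = a
    · subst hx
      simp [Equiv.swap_apply_def, Prod.ext_iff]
      split_ifs <;> simp_all
    · simp [Equiv.swap_apply_def, Prod.ext_iff, hx]
  · by_cases hx : x = a
    · subst hx
      simp [Equiv.swap_apply_def, Prod.ext_iff]
      split_ifs <;> simp_all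
    · simp [Equiv.swap_apply_def, Prod.ext_iff, hx]

/-- The row function for our permutation. -/
def rowFun {n : ℕ} (a b i1 j1 i2 j2 : Fin n) : Fin n → Equiv.Perm (Fin n) :=
  fun x => if x = a then Equiv.swap i1 j1 else if x = b then Equiv.swap i2 j2 else 1

lemma prod_eq_shear {n : ℕ} (a b i1 j1 i2 j2 : Fin n) (hab : a ≠ b) :
    Equiv.swap (a, i1) (a, j1) * Equiv.swap (b, i2) (b, j2) =
      shear (rowFun a b i1 j1 i2 j2) := by
  rw [swap_row, swap_row, shear_mul]
  congr 1
  funext x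
  unfold rowFun
  by_cases hxa : x = a
  · simp [hxa, hab]
  · by_cases hxb : x = b <;> simp [hxa, hxb, Ne.symm hab]

lemma swap_eq_swap_iff {n : ℕ} {i j k l : Fin n} (hij : i ≠ j) :
    Equiv.swap i j = Equiv.swap k l ↔ ((i = k ∧ j = l) ∨ (i = l ∧ j = k)) := by
  constructor
  · intro h
    have hkl : k ≠ l := by
      intro hkl
      rw [hkl, Equiv.swap_self] at h
      exact hij (Equiv.swap_eq_one_iff.mp (by simpa using h))
    have hi : i = k ∨ i = l := by
      have : Equiv.swap k l i ≠ i := by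
        rw [← h]; simp [Equiv.swap_apply_left, hij.symm]
      exact (Equiv.swap_apply_ne_self_iff.mp this).2
    have hj : j = k ∨ j = l := by
      have : Equiv.swap k l j ≠ j := by
        rw [← h]; simp [Equiv.swap_apply_right, hij]
      exact (Equiv.swap_apply_ne_self_iff.mp this).2
    rcases hi with hi | hi <;> rcases hj with hj | hj
    · exact absurd (hi.trans hj.symm) hij
    · exact Or.inl ⟨hi, hj⟩
    · exact Or.inr ⟨hi, hj⟩
    · exact absurd (hi.trans hj.symm) hij
  · rintro (⟨rfl, rfl⟩ | ⟨rfl, rfl⟩)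
    · rfl
    · exact Equiv.swap_comm _ _

lemma stable_char {n : ℕ} (a b i1 j1 i2 j2 : Fin n) (hab : a ≠ b)
    (h1 : i1 ≠ j1) (h2 : i2 ≠ j2) :
    StableRank1 (Equiv.swap (a, i1) (a, j1) * Equiv.swap (b, i2) (b, j2)) ↔
      ((i1 ≠ a ∧ i1 ≠ b ∧ j1 ≠ a ∧ j1 ≠ b ∧ i2 ≠ a ∧ i2 ≠ b ∧ j2 ≠ a ∧ j2 ≠ b) ∨
       (((i1 = a ∧ j1 = b) ∨ (i1 = b ∧ j1 = a)) ∧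
        ((i2 = a ∧ j2 = b) ∨ (i2 = b ∧ j2 = a)))) := by
  rw [prod_eq_shear a b i1 j1 i2 j2 hab, stable_shear]
  set σ := rowFun a b i1 j1 i2 j2 with hσ
  have hσa : σ a = Equiv.swap i1 j1 := if_pos rfl
  have hσb : σ b = Equiv.swap i2 j2 := by
    show (if b = a then _ else if b = b then _ else _) = _
    rw [if_neg (Ne.symm hab), if_pos rfl]
  have hσo : ∀ y, y ≠ a → y ≠ b → σ y = 1 := by
    intro y hya hyb
    show (if y = a then _ else if y = b then _ else _) = _
    rw [if_neg hya, if_neg hyb]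
  have hσ1 : ∀ y, σ y ≠ 1 ↔ (y = a ∨ y = b) := by
    intro y
    constructor
    · intro h
      by_contra hc
      push_neg at hc
      exact h (hσo y hc.1 hc.2)
    · rintro (rfl | rfl)
      · rw [hσa]; simpa [Equiv.swap_eq_one_iff] using h1
      · rw [hσb]; simpa [Equiv.swap_eq_one_iff] using h2
  have cond_iff : (∀ x y, σ (σ x y) = σ y) ↔ (σ i1 = σ j1 ∧ σ i2 = σ j2) := by
    constructor
    · intro h
      refine ⟨?_, ?_⟩
      · have := h a i1
        rw [hσa, Equiv.swap_apply_left] at this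
        exact this.symm
      · have := h b i2
        rw [hσb, Equiv.swap_apply_left] at this
        exact this.symm
    · rintro ⟨e1, e2⟩ x y
      by_cases hxa : x = a
      · subst hxa
        rw [hσa]
        rcases eq_or_ne y i1 with rfl | hy1
        · rw [Equiv.swap_apply_left]; exact e1.symm
        · rcases eq_or_ne y j1 with rfl | hy2
          · rw [Equiv.swap_apply_right]; exact e1
          · rw [Equiv.swap_apply_of_ne_of_ne hy1 hy2]
      · by_cases hxb : x = b
        · subst hxb
          rw [hσb]
          rcases eq_or_ne y i2 with rfl | hy1
          · rw [Equiv.swap_apply_left]; exact e2.symm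
          · rcases eq_or_ne y j2 with rfl | hy2
            · rw [Equiv.swap_apply_right]; exact e2
            · rw [Equiv.swap_apply_of_ne_of_ne hy1 hy2]
        · rw [hσo x hxa hxb]; rfl
  rw [cond_iff]
  have step : ∀ k l : Fin n, k ≠ l → σ k = σ l → (k = a ∨ k = b ∨ l = a ∨ l = b) →
      ((k = a ∧ l = b) ∨ (k = b ∧ l = a)) ∧ Equiv.swap i1 j1 = Equiv.swap i2 j2 := by
    intro k l hkl h hm
    have hk : k = a ∨ k = b := by
      rcases hm with h' | h' | h' | h'
      · exact Or.inl h'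
      · exact Or.inr h'
      · exact (hσ1 k).mp (by rw [h]; exact (hσ1 l).mpr (Or.inl h'))
      · exact (hσ1 k).mp (by rw [h]; exact (hσ1 l).mpr (Or.inr h'))
    have hl : l = a ∨ l = b := (hσ1 l).mp (by rw [← h]; exact (hσ1 k).mpr hk)
    rcases hk with rfl | rfl <;> rcases hl with hl | hl
    · exact absurd hl.symm hkl
    · subst hl
      rw [hσa, hσb] at h
      exact ⟨Or.inl ⟨rfl, rfl⟩, h⟩
    · subst hl
      rw [hσa, hσb] at h
      exact ⟨Or.inr ⟨rfl, rfl⟩, h.symm⟩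
    · exact absurd hl.symm hkl
  constructor
  · rintro ⟨e1, e2⟩
    by_cases hm1 : i1 = a ∨ i1 = b ∨ j1 = a ∨ j1 = b
    · obtain ⟨hp1, hs⟩ := step i1 j1 h1 e1 hm1
      refine Or.inr ⟨hp1, ?_⟩
      have : Equiv.swap i2 j2 = Equiv.swap a b := by
        rw [← hs]
        rcases hp1 with ⟨rfl, rfl⟩ | ⟨rfl, rfl⟩
        · rfl
        · exact Equiv.swap_comm _ _
      exact (swap_eq_swap_iff h2).mp this
    · by_cases hm2 : i2 = a ∨ i2 = b ∨ j2 = a ∨ j2 = b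
      · obtain ⟨hp2, hs⟩ := step i2 j2 h2 e2 hm2
        refine Or.inr ⟨?_, hp2⟩
        have : Equiv.swap i1 j1 = Equiv.swap a b := by
          rw [hs]
          rcases hp2 with ⟨rfl, rfl⟩ | ⟨rfl, rfl⟩
          · rfl
          · exact Equiv.swap_comm _ _
        exact (swap_eq_swap_iff h1).mp this
      · push_neg at hm1 hm2
        exact Or.inl ⟨hm1.1, hm1.2.1, hm1.2.2.1, hm1.2.2.2, hm2.1, hm2.2.1, hm2.2.2.1, hm2.2.2.2⟩
  · rintro (⟨n1, n2, n3, n4, n5, n6, n7, n8⟩ | ⟨hp1, hp2⟩)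
    · rw [hσo i1 n1 n2, hσo j1 n3 n4, hσo i2 n5 n6, hσo j2 n7 n8]
      exact ⟨rfl, rfl⟩
    · have hs : Equiv.swap i1 j1 = Equiv.swap i2 j2 := by
        have e1 : Equiv.swap i1 j1 = Equiv.swap a b := by
          rcases hp1 with ⟨rfl, rfl⟩ | ⟨rfl, rfl⟩
          · rfl
          · exact Equiv.swap_comm _ _
        have e2 : Equiv.swap i2 j2 = Equiv.swap a b := by
          rcases hp2 with ⟨rfl, rfl⟩ | ⟨rfl, rfl⟩
          · rfl
          · exact Equiv.swap_comm _ _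
        rw [e1, e2]
      constructor
      · rcases hp1 with ⟨rfl, rfl⟩ | ⟨rfl, rfl⟩
        · rw [hσa, hσb]; exact hs
        · rw [hσa, hσb]; exact hs.symm
      · rcases hp2 with ⟨rfl, rfl⟩ | ⟨rfl, rfl⟩
        · rw [hσa, hσb]; exact hs
        · rw [hσa, hσb]; exact hs.symm

lemma inter_empty_iff {n : ℕ} {a b i j k l : Fin n} :
    (({a, b} : Finset (Fin n)) ∩ {i, j, k, l} = ∅) ↔
      (i ≠ a ∧ i ≠ b ∧ j ≠ a ∧ j ≠ b ∧ k ≠ a ∧ k ≠ b ∧ l ≠ a ∧ l ≠ b) := by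
  simp only [Finset.eq_empty_iff_forall_notMem, Finset.mem_inter, Finset.mem_insert,
    Finset.mem_singleton, not_and, not_or]
  constructor
  · intro h
    obtain ⟨h1, h2, h3, h4⟩ := h a (Or.inl rfl)
    obtain ⟨h5, h6, h7, h8⟩ := h b (Or.inr rfl)
    exact ⟨Ne.symm h1, Ne.symm h5, Ne.symm h2, Ne.symm h6, Ne.symm h3, Ne.symm h7,
      Ne.symm h4, Ne.symm h8⟩
  · rintro ⟨h1, h2, h3, h4, h5, h6, h7, h8⟩ x (rfl | rfl)
    · exact ⟨Ne.symm h1, Ne.symm h3, Ne.symm h5, Ne.symm h7⟩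
    · exact ⟨Ne.symm h2, Ne.symm h4, Ne.symm h6, Ne.symm h8⟩

lemma pairs_eq_iff {n : ℕ} {a b i j k l : Fin n} (hab : a ≠ b) (hij : i ≠ j) (hkl : k ≠ l) :
    (({a, b} : Finset (Fin n)) = {i, j, k, l}) ↔
      (((i = a ∧ j = b) ∨ (i = b ∧ j = a)) ∧ ((k = a ∧ l = b) ∨ (k = b ∧ l = a))) := by
  simp only [Finset.ext_iff, Finset.mem_insert, Finset.mem_singleton]
  constructor
  · intro h
    have hi := (h i).mpr (Or.inl rfl)
    have hj := (h j).mpr (Or.inr (Or.inl rfl))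
    have hk := (h k).mpr (Or.inr (Or.inr (Or.inl rfl)))
    have hl := (h l).mpr (Or.inr (Or.inr (Or.inr rfl)))
    constructor
    · rcases hi with rfl | rfl <;> rcases hj with hj | hj <;> tauto
    · rcases hk with rfl | rfl <;> rcases hl with hl | hl <;> tauto
  · rintro ⟨⟨rfl, rfl⟩ | ⟨rfl, rfl⟩, ⟨rfl, rfl⟩ | ⟨rfl, rfl⟩⟩ x <;> tauto

lemma pair_eq_of_lt {n : ℕ} {i j k l : Fin n} (hij : i < j) (hkl : k < l)
    (h : ({i, j} : Finset (Fin n)) = {k, l}) : i = k ∧ j = l := by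
  simp only [Finset.ext_iff, Finset.mem_insert, Finset.mem_singleton] at h
  have hi := (h i).mp (Or.inl rfl)
  have hj := (h j).mp (Or.inr rfl)
  have hk := (h k).mpr (Or.inl rfl)
  rcases hi with rfl | rfl
  · rcases hj with rfl | rfl
    · exact absurd hij (lt_irrefl _)
    · exact ⟨rfl, rfl⟩
  · rcases hk with rfl | rfl
    · exact absurd hkl (lt_irrefl _)
    · exact absurd (hij.trans hkl) (lt_irrefl _)

lemma card_ordered_pairs {n : ℕ} (t : Finset (Fin n)) :
    ((t ×ˢ t).filter fun p => p.1 < p.2).card = t.card.choose 2 := by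
  rw [← Finset.card_powersetCard 2 t]
  apply Finset.card_bij (fun p _ => ({p.1, p.2} : Finset (Fin n)))
  · rintro ⟨x, y⟩ hp
    simp only [Finset.mem_filter, Finset.mem_product] at hp
    rw [Finset.mem_powersetCard]
    refine ⟨?_, Finset.card_pair (ne_of_lt hp.2)⟩
    rw [Finset.insert_subset_iff, Finset.singleton_subset_iff]
    exact ⟨hp.1.1, hp.1.2⟩
  · rintro ⟨x, y⟩ hp ⟨x', y'⟩ hp' h
    simp only [Finset.mem_filter, Finset.mem_product] at hp hp'
    obtain ⟨h1, h2⟩ := pair_eq_of_lt hp.2 hp'.2 h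
    simp [h1, h2]
  · intro s hs
    rw [Finset.mem_powersetCard] at hs
    obtain ⟨x, y, hxy, rfl⟩ := Finset.card_eq_two.mp hs.2
    have hx : x ∈ t := hs.1 (Finset.mem_insert_self _ _)
    have hy : y ∈ t := hs.1 (Finset.mem_insert_of_mem (Finset.mem_singleton_self _))
    rcases lt_or_gt_of_ne hxy with h | h
    · exact ⟨(x, y), Finset.mem_filter.mpr ⟨Finset.mem_product.mpr ⟨hx, hy⟩, h⟩, rfl⟩
    · exact ⟨(y, x), Finset.mem_filter.mpr ⟨Finset.mem_product.mpr ⟨hy, hx⟩, h⟩,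
        Finset.pair_comm y x⟩

lemma rowFun_symm {n : ℕ} (a b i1 j1 i2 j2 : Fin n) (hab : a ≠ b) :
    rowFun a b i1 j1 i2 j2 = rowFun b a i2 j2 i1 j1 := by
  funext x
  unfold rowFun
  by_cases hxa : x = a
  · simp [hxa, hab, Ne.symm hab]
  · by_cases hxb : x = b <;> simp [hxa, hxb, hab, Ne.symm hab]

lemma prod_swap_comm {n : ℕ} (a b i1 j1 i2 j2 : Fin n) (hab : a ≠ b) :
    Equiv.swap (a, i1) (a, j1) * Equiv.swap (b, i2) (b, j2) =
      Equiv.swap (b, i2) (b, j2) * Equiv.swap (a, i1) (a, j1) := by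
  rw [prod_eq_shear a b i1 j1 i2 j2 hab, prod_eq_shear b a i2 j2 i1 j1 (Ne.symm hab),
    rowFun_symm a b i1 j1 i2 j2 hab]

/-- parameter tuple: ((a,b),((i1,j1),(i2,j2))) -/
def gmap {n : ℕ} (x : (Fin n × Fin n) × (Fin n × Fin n) × (Fin n × Fin n)) :
    Equiv.Perm (Fin n × Fin n) :=
  Equiv.swap (x.1.1, x.2.1.1) (x.1.1, x.2.1.2) * Equiv.swap (x.1.2, x.2.2.1) (x.1.2, x.2.2.2)

def Tcond {n : ℕ} (x : (Fin n × Fin n) × (Fin n × Fin n) × (Fin n × Fin n)) : Prop :=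
  x.1.1 < x.1.2 ∧ x.2.1.1 < x.2.1.2 ∧ x.2.2.1 < x.2.2.2 ∧
  ((x.2.1.1 ≠ x.1.1 ∧ x.2.1.1 ≠ x.1.2 ∧ x.2.1.2 ≠ x.1.1 ∧ x.2.1.2 ≠ x.1.2 ∧
    x.2.2.1 ≠ x.1.1 ∧ x.2.2.1 ≠ x.1.2 ∧ x.2.2.2 ≠ x.1.1 ∧ x.2.2.2 ≠ x.1.2) ∨
   (x.2.1.1 = x.1.1 ∧ x.2.1.2 = x.1.2 ∧ x.2.2.1 = x.1.1 ∧ x.2.2.2 = x.1.2))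

instance {n : ℕ} : DecidablePred (Tcond (n := n)) := fun _ => by
  unfold Tcond; infer_instance

def Tset (n : ℕ) : Finset ((Fin n × Fin n) × (Fin n × Fin n) × (Fin n × Fin n)) :=
  Finset.univ.filter Tcond

lemma inj_param {n : ℕ} {a b a' b' i1 j1 i2 j2 i1' j1' i2' j2' : Fin n}
    (hab : a < b) (hab' : a' < b') (h1 : i1 < j1) (h2 : i2 < j2)
    (h1' : i1' < j1') (h2' : i2' < j2')
    (h : Equiv.swap (a, i1) (a, j1) * Equiv.swap (b, i2) (b, j2) =
      Equiv.swap (a', i1') (a', j1') * Equiv.swap (b', i2') (b', j2')) :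
    a = a' ∧ b = b' ∧ i1 = i1' ∧ j1 = j1' ∧ i2 = i2' ∧ j2 = j2' := by
  rw [prod_eq_shear a b i1 j1 i2 j2 (ne_of_lt hab),
    prod_eq_shear a' b' i1' j1' i2' j2' (ne_of_lt hab')] at h
  have hσ := shear_inj h
  have ne1 : ∀ (p q : Fin n), p < q → Equiv.swap p q ≠ 1 := fun p q hpq => by
    simpa [Equiv.swap_eq_one_iff] using ne_of_lt hpq
  -- values of rowFun
  have va : ∀ (u v k l k' l' : Fin n), rowFun u v k l k' l' u = Equiv.swap k l :=
    fun _ _ _ _ _ _ => if_pos rfl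
  have vb : ∀ (u v k l k' l' : Fin n), u ≠ v → rowFun u v k l k' l' v = Equiv.swap k' l' := by
    intro u v k l k' l' huv
    unfold rowFun
    rw [if_neg (Ne.symm huv), if_pos rfl]
  have vo : ∀ (u v k l k' l' y : Fin n), y ≠ u → y ≠ v → rowFun u v k l k' l' y = 1 := by
    intro u v k l k' l' y h1 h2
    unfold rowFun
    rw [if_neg h1, if_neg h2]
  have mem : ∀ y : Fin n, rowFun a b i1 j1 i2 j2 y ≠ 1 → y = a' ∨ y = b' := by
    intro y hy
    by_contra hc
    push_neg at hc
    rw [hσ, vo a' b' _ _ _ _ y hc.1 hc.2] at hy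
    exact hy rfl
  have mem' : ∀ y : Fin n, rowFun a' b' i1' j1' i2' j2' y ≠ 1 → y = a ∨ y = b := by
    intro y hy
    by_contra hc
    push_neg at hc
    rw [← hσ, vo a b _ _ _ _ y hc.1 hc.2] at hy
    exact hy rfl
  have hma : a = a' ∨ a = b' := mem a (by rw [va]; exact ne1 _ _ h1)
  have hmb : b = a' ∨ b = b' := mem b (by rw [vb _ _ _ _ _ _ (ne_of_lt hab)]; exact ne1 _ _ h2)
  have hma' : a' = a ∨ a' = b := mem' a' (by rw [va]; exact ne1 _ _ h1')
  have haa : a = a' ∧ b = b' := by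
    rcases hma with rfl | rfl
    · rcases hmb with rfl | rfl
      · exact absurd hab (lt_irrefl _)
      · exact ⟨rfl, rfl⟩
    · rcases hma' with rfl | rfl
      · exact absurd hab' (lt_irrefl _)
      · exact absurd (hab.trans hab') (lt_irrefl _)
  obtain ⟨rfl, rfl⟩ := haa
  have e1 : Equiv.swap i1 j1 = Equiv.swap i1' j1' := by
    rw [← va a b i1 j1 i2 j2, hσ, va]
  have e2 : Equiv.swap i2 j2 = Equiv.swap i2' j2' := by
    rw [← vb a b i1 j1 i2 j2 (ne_of_lt hab), hσ, vb _ _ _ _ _ _ (ne_of_lt hab)]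
  rcases (swap_eq_swap_iff (ne_of_lt h1)).mp e1 with ⟨hx, hy⟩ | ⟨rfl, rfl⟩
  · rcases (swap_eq_swap_iff (ne_of_lt h2)).mp e2 with ⟨hx', hy'⟩ | ⟨rfl, rfl⟩
    · exact ⟨rfl, rfl, hx, hy, hx', hy'⟩
    · exact absurd (h2.trans h2') (lt_irrefl _)
  · exact absurd (h1.trans h1') (lt_irrefl _)

lemma card_Tset (n : ℕ) : (Tset n).card = n.choose 2 * ((n - 2).choose 2 ^ 2 + 1) := by
  classical
  set k := (n - 2).choose 2 with hk
  have colcard : ∀ a b : Fin n, a < b →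
      ((Finset.univ.filter fun p : Fin n × Fin n =>
        p.1 < p.2 ∧ p.1 ≠ a ∧ p.1 ≠ b ∧ p.2 ≠ a ∧ p.2 ≠ b).card = k) := by
    intro a b hab
    have hset : (Finset.univ.filter fun p : Fin n × Fin n =>
        p.1 < p.2 ∧ p.1 ≠ a ∧ p.1 ≠ b ∧ p.2 ≠ a ∧ p.2 ≠ b) =
        ((({a, b}ᶜ : Finset (Fin n)) ×ˢ ({a, b}ᶜ : Finset (Fin n))).filter
          fun p => p.1 < p.2) := by
      ext p
      simp only [Finset.mem_filter, Finset.mem_product, Finset.mem_compl, Finset.mem_univ,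
        true_and, Finset.mem_insert, Finset.mem_singleton, not_or]
      tauto
    rw [hset, card_ordered_pairs]
    have : ({a, b}ᶜ : Finset (Fin n)).card = n - 2 := by
      rw [Finset.card_compl, Finset.card_pair (ne_of_lt hab), Fintype.card_fin]
    rw [this]
  have inner : ∀ ab : Fin n × Fin n, ab.1 < ab.2 →
      ((Finset.univ.filter fun y : (Fin n × Fin n) × (Fin n × Fin n) =>
        Tcond (ab, y)).card = k ^ 2 + 1) := by
    rintro ⟨a, b⟩ hab
    set C := Finset.univ.filter (fun p : Fin n × Fin n =>
      p.1 < p.2 ∧ p.1 ≠ a ∧ p.1 ≠ b ∧ p.2 ≠ a ∧ p.2 ≠ b) with hC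
    have hset : (Finset.univ.filter fun y : (Fin n × Fin n) × (Fin n × Fin n) =>
        Tcond ((a, b), y)) = (C ×ˢ C) ∪ {((a, b), (a, b))} := by
      ext ⟨⟨x1, y1⟩, ⟨x2, y2⟩⟩
      simp only [Finset.mem_filter]
      simp only [Tcond, hC, Finset.mem_filter, Finset.mem_union, Finset.mem_product,
        Finset.mem_singleton, Finset.mem_univ, true_and, Prod.mk.injEq]
      constructor
      · rintro ⟨-, h1, h2, h3 | h4⟩
        · exact Or.inl ⟨⟨h1, h3.1, h3.2.1, h3.2.2.1, h3.2.2.2.1⟩,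
            ⟨h2, h3.2.2.2.2.1, h3.2.2.2.2.2.1, h3.2.2.2.2.2.2.1, h3.2.2.2.2.2.2.2⟩⟩
        · exact Or.inr ⟨⟨h4.1, h4.2.1⟩, h4.2.2.1, h4.2.2.2⟩
      · rintro (⟨⟨g1, g2, g3, g4, g5⟩, ⟨g6, g7, g8, g9, g10⟩⟩ | ⟨⟨e1, e2⟩, e3, e4⟩)
        · exact ⟨hab, g1, g6, Or.inl ⟨g2, g3, g4, g5, g7, g8, g9, g10⟩⟩
        · subst e1; subst e2; subst e3; subst e4
          exact ⟨hab, hab, hab, Or.inr ⟨rfl, rfl, rfl, rfl⟩⟩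
    have hdisj : Disjoint (C ×ˢ C) ({((a, b), (a, b))} :
        Finset ((Fin n × Fin n) × (Fin n × Fin n))) := by
      rw [Finset.disjoint_singleton_right, Finset.mem_product]
      rintro ⟨hmem, -⟩
      rw [hC, Finset.mem_filter] at hmem
      exact hmem.2.2.1 rfl
    rw [hset, Finset.card_union_of_disjoint hdisj, Finset.card_product,
      colcard a b hab, Finset.card_singleton, sq]
  rw [Tset, Finset.card_filter, Fintype.sum_prod_type]
  have hsum : ∀ ab : Fin n × Fin n,
      (∑ y : (Fin n × Fin n) × (Fin n × Fin n), if Tcond (ab, y) then 1 else 0) =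
      if ab.1 < ab.2 then k ^ 2 + 1 else 0 := by
    intro ab
    by_cases hab : ab.1 < ab.2
    · rw [if_pos hab, ← inner ab hab, Finset.card_filter]
    · rw [if_neg hab]
      apply Finset.sum_eq_zero
      intro y _
      rw [if_neg]
      intro hc
      exact hab hc.1
  rw [Finset.sum_congr rfl fun ab _ => hsum ab, ← Finset.sum_filter, Finset.sum_const,
    smul_eq_mul]
  congr 1
  have : (Finset.univ : Finset (Fin n × Fin n)) = Finset.univ ×ˢ Finset.univ :=
    Finset.univ_product_univ.symm
  rw [this, card_ordered_pairs, Finset.card_univ, Fintype.card_fin]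

lemma pairwise_iff {n : ℕ} {b1 b2 k1 l1 k2 l2 : Fin n} (h : b1 ≠ b2) :
    List.Pairwise (· ≠ ·) [((b1, k1) : Fin n × Fin n), (b1, l1), (b2, k2), (b2, l2)] ↔
      (k1 ≠ l1 ∧ k2 ≠ l2) := by
  constructor
  · intro hp
    rw [List.pairwise_cons, List.pairwise_cons, List.pairwise_cons] at hp
    constructor
    · intro hc
      exact hp.1 (b1, l1) (by simp) (by rw [hc])
    · intro hc
      exact hp.2.2.1 (b2, l2) (by simp) (by rw [hc])
  · rintro ⟨hkl1, hkl2⟩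
    have n1 : ((b1, k1) : Fin n × Fin n) ≠ (b1, l1) := fun e => hkl1 (congrArg Prod.snd e)
    have n2 : ((b1, k1) : Fin n × Fin n) ≠ (b2, k2) := fun e => h (congrArg Prod.fst e)
    have n3 : ((b1, k1) : Fin n × Fin n) ≠ (b2, l2) := fun e => h (congrArg Prod.fst e)
    have n4 : ((b1, l1) : Fin n × Fin n) ≠ (b2, k2) := fun e => h (congrArg Prod.fst e)
    have n5 : ((b1, l1) : Fin n × Fin n) ≠ (b2, l2) := fun e => h (congrArg Prod.fst e)
    have n6 : ((b2, k2) : Fin n × Fin n) ≠ (b2, l2) := fun e => hkl2 (congrArg Prod.snd e)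
    refine List.Pairwise.cons ?_ (List.Pairwise.cons ?_
      (List.Pairwise.cons ?_ (List.Pairwise.cons (fun p hp => absurd hp List.not_mem_nil) List.Pairwise.nil)))
    · intro p hp
      rcases List.mem_cons.mp hp with rfl | hp
      · exact n1
      rcases List.mem_cons.mp hp with rfl | hp
      · exact n2
      rcases List.mem_cons.mp hp with rfl | hp
      · exact n3
      · exact absurd hp List.not_mem_nil
    · intro p hp
      rcases List.mem_cons.mp hp with rfl | hp
      · exact n4
      rcases List.mem_cons.mp hp with rfl | hp
      · exact n5
      · exact absurd hp List.not_mem_nil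
    · intro p hp
      rcases List.mem_cons.mp hp with rfl | hp
      · exact n6
      · exact absurd hp List.not_mem_nil


lemma set_eq_s5 (n : ℕ) :
    {u : Equiv.Perm (Fin n × Fin n) |
        ∃ b1 b2 k1 l1 k2 l2 : Fin n,
          b1 ≠ b2 ∧
          List.Pairwise (· ≠ ·)
            [((b1, k1) : Fin n × Fin n), (b1, l1), (b2, k2), (b2, l2)] ∧
          u = Equiv.swap (b1, k1) (b1, l1) * Equiv.swap (b2, k2) (b2, l2) ∧
          StableRank1 u} = ↑((Tset n).image gmap) := by
  ext u
  simp only [Set.mem_setOf_eq, Finset.coe_image, Set.mem_image, Finset.mem_coe]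
  constructor
  · rintro ⟨b1, b2, k1, l1, k2, l2, hne, hpw, hu, hst⟩
    obtain ⟨hk1, hk2⟩ := (pairwise_iff hne).mp hpw
    obtain ⟨m1, m2, hm, e1⟩ : ∃ m1 m2, m1 < m2 ∧
        Equiv.swap ((b1 : Fin n), k1) (b1, l1) = Equiv.swap (b1, m1) (b1, m2) := by
      rcases lt_or_gt_of_ne hk1 with h | h
      · exact ⟨k1, l1, h, rfl⟩
      · exact ⟨l1, k1, h, Equiv.swap_comm _ _⟩
    obtain ⟨m3, m4, hm', e2⟩ : ∃ m3 m4, m3 < m4 ∧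
        Equiv.swap ((b2 : Fin n), k2) (b2, l2) = Equiv.swap (b2, m3) (b2, m4) := by
      rcases lt_or_gt_of_ne hk2 with h | h
      · exact ⟨k2, l2, h, rfl⟩
      · exact ⟨l2, k2, h, Equiv.swap_comm _ _⟩
    obtain ⟨a, b, hab, i1, j1, h1, i2, j2, h2, hu'⟩ :
        ∃ a b, a < b ∧ ∃ i1 j1, i1 < j1 ∧ ∃ i2 j2, i2 < j2 ∧
          u = Equiv.swap ((a : Fin n), i1) (a, j1) * Equiv.swap (b, i2) (b, j2) := by
      rcases lt_or_gt_of_ne hne with h | h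
      · exact ⟨b1, b2, h, m1, m2, hm, m3, m4, hm', by rw [hu, e1, e2]⟩
      · exact ⟨b2, b1, h, m3, m4, hm', m1, m2, hm,
          by rw [hu, e1, e2, prod_swap_comm _ _ _ _ _ _ hne]⟩
    refine ⟨((a, b), ((i1, j1), (i2, j2))), ?_, hu'.symm⟩
    rw [Tset, Finset.mem_filter]
    refine ⟨Finset.mem_univ _, hab, h1, h2, ?_⟩
    rw [hu'] at hst
    rcases (stable_char a b i1 j1 i2 j2 (ne_of_lt hab) (ne_of_lt h1) (ne_of_lt h2)).mp hst with
      hd | ⟨hp1, hp2⟩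
    · exact Or.inl hd
    · rcases hp1 with ⟨ea1, ea2⟩ | ⟨eb1, eb2⟩
      · rcases hp2 with ⟨ec1, ec2⟩ | ⟨ed1, ed2⟩
        · exact Or.inr ⟨ea1, ea2, ec1, ec2⟩
        · exact absurd ((ed1 ▸ (ed2 ▸ h2 : i2 < a) : b < a).trans hab) (lt_irrefl _)
      · exact absurd ((eb1 ▸ (eb2 ▸ h1 : i1 < a) : b < a).trans hab) (lt_irrefl _)
  · rintro ⟨⟨⟨a, b⟩, ⟨⟨i1, j1⟩, ⟨i2, j2⟩⟩⟩, hx, rfl⟩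
    rw [Tset, Finset.mem_filter] at hx
    obtain ⟨-, hab, h1, h2, hcond⟩ := hx
    refine ⟨a, b, i1, j1, i2, j2, ne_of_lt hab,
      (pairwise_iff (ne_of_lt hab)).mpr ⟨ne_of_lt h1, ne_of_lt h2⟩, rfl, ?_⟩
    rw [show gmap ((a, b), ((i1, j1), (i2, j2))) =
      Equiv.swap ((a : Fin n), i1) (a, j1) * Equiv.swap (b, i2) (b, j2) from rfl]
    rw [stable_char a b i1 j1 i2 j2 (ne_of_lt hab) (ne_of_lt h1) (ne_of_lt h2)]
    rcases hcond with hd | ⟨e1, e2, e3, e4⟩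
    · exact Or.inl hd
    · exact Or.inr ⟨Or.inl ⟨e1, e2⟩, Or.inl ⟨e3, e4⟩⟩

lemma gmap_injOn (n : ℕ) : Set.InjOn gmap (↑(Tset n) : Set ((Fin n × Fin n) × (Fin n × Fin n) × (Fin n × Fin n))) := by
  rintro ⟨⟨a, b⟩, ⟨⟨i1, j1⟩, ⟨i2, j2⟩⟩⟩ hx ⟨⟨a', b'⟩, ⟨⟨i1', j1'⟩, ⟨i2', j2'⟩⟩⟩ hy h
  simp only [Finset.coe_filter, Tset, Set.mem_setOf_eq, Finset.mem_coe, Finset.mem_filter] at hx hy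
  obtain ⟨-, hab, h1, h2, -⟩ := hx
  obtain ⟨-, hab', h1', h2', -⟩ := hy
  obtain ⟨e1, e2, e3, e4, e5, e6⟩ := inj_param hab hab' h1 h2 h1' h2' h
  exact Prod.ext (Prod.ext e1 e2) (Prod.ext (Prod.ext e3 e4) (Prod.ext e5 e6))

theorem stmt_5 (n : ℕ) (hn : 1 ≤ n) (a1 a2 i1 j1 i2 j2 : Fin n)
    (ha : a1 ≠ a2)
    (hdist : List.Pairwise (· ≠ ·)
      [((a1, i1) : Fin n × Fin n), (a1, j1), (a2, i2), (a2, j2)]) :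
    (StableRank1 (Equiv.swap (a1, i1) (a1, j1) * Equiv.swap (a2, i2) (a2, j2)) ↔
      (({a1, a2} : Finset (Fin n)) ∩ {i1, j1, i2, j2} = ∅ ∨
       ({a1, a2} : Finset (Fin n)) = {i1, j1, i2, j2})) ∧
    Set.ncard {u : Equiv.Perm (Fin n × Fin n) |
        ∃ b1 b2 k1 l1 k2 l2 : Fin n,
          b1 ≠ b2 ∧
          List.Pairwise (· ≠ ·)
            [((b1, k1) : Fin n × Fin n), (b1, l1), (b2, k2), (b2, l2)] ∧
          u = Equiv.swap (b1, k1) (b1, l1) * Equiv.swap (b2, k2) (b2, l2) ∧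
          StableRank1 u} =
      n.choose 2 * ((n - 2).choose 2 ^ 2 + 1) := by
  obtain ⟨h1, h2⟩ := (pairwise_iff ha).mp hdist
  constructor
  · rw [stable_char a1 a2 i1 j1 i2 j2 ha h1 h2, inter_empty_iff, pairs_eq_iff ha h1 h2]
  · rw [set_eq_s5 n, Set.ncard_coe_finset, Finset.card_image_of_injOn (gmap_injOn n), card_Tset]
end

section
/- Let n ≥ 1 and let u, v ∈ S([n]^2). Then u and v are bicompatible if and only if the antitransposed permutations ᵃu and ᵃv are bicompatible, where for w ∈ S([n]^2) the antitransposed permutation ᵃw ∈ S([n]^2) is defined by ᵃw(x,y) = (n+1 − w_2(n+1−y, n+1−x), n+1 − w_1(n+1−y, n+1−x)), writing w(p,q) = (w_1(p,q), w_2(p,q)). -/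
/-- `u` and `v` are bicompatible. -/
def Bicompatible {n : ℕ} (u v : Equiv.Perm (Fin n × Fin n)) : Prop :=
  Compatible u v ∧ Compatible v u

/-- The order-reversing involution `(x, y) ↦ (n+1-y, n+1-x)` of `[n]²`
(written with `Fin.rev` in the 0-indexed setting). -/
def antiDiag (n : ℕ) : Equiv.Perm (Fin n × Fin n) :=
  Function.Involutive.toPerm (fun p => (p.2.rev, p.1.rev)) (fun p => by simp)

/-- The antitransposed permutation
`ᵃw(x,y) = (n+1 − w₂(n+1−y, n+1−x), n+1 − w₁(n+1−y, n+1−x))`. -/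
def antitr {n : ℕ} (w : Equiv.Perm (Fin n × Fin n)) : Equiv.Perm (Fin n × Fin n) :=
  ((antiDiag n).trans w).trans (antiDiag n)


/-- The triple reversal `(x,y,z) ↦ (z.rev, y.rev, x.rev)`. -/
def A3 (n : ℕ) : Equiv.Perm (Fin n × Fin n × Fin n) :=
  Function.Involutive.toPerm (fun p => (p.2.2.rev, p.2.1.rev, p.1.rev)) (fun p => by simp)

lemma A3_mul_self (n : ℕ) : A3 n * A3 n = 1 := by
  ext p <;> simp [A3, Function.Involutive.toPerm]

lemma A3_inv (n : ℕ) : (A3 n)⁻¹ = A3 n := by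
  rw [inv_eq_iff_mul_eq_one, A3_mul_self]

lemma A3_cancel {n : ℕ} (x : Equiv.Perm (Fin n × Fin n × Fin n)) :
    A3 n * (A3 n * x) = x := by
  rw [← mul_assoc, A3_mul_self, one_mul]

lemma tensorOne_antitr {n : ℕ} (w : Equiv.Perm (Fin n × Fin n)) :
    tensorOne (antitr w) = A3 n * oneTensor w * A3 n := by
  ext p <;>
    simp [tensorOne, oneTensor, antitr, antiDiag, A3, Function.Involutive.toPerm,
      Equiv.permCongr, Equiv.Perm.mul_apply]

lemma oneTensor_antitr {n : ℕ} (w : Equiv.Perm (Fin n × Fin n)) :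
    oneTensor (antitr w) = A3 n * tensorOne w * A3 n := by
  ext p <;>
    simp [tensorOne, oneTensor, antitr, antiDiag, A3, Function.Involutive.toPerm,
      Equiv.permCongr, Equiv.Perm.mul_apply]

lemma compatible_antitr {n : ℕ} (u v : Equiv.Perm (Fin n × Fin n)) :
    Compatible (antitr u) (antitr v) ↔ Compatible v u := by
  unfold Compatible
  rw [tensorOne_antitr, oneTensor_antitr]
  constructor
  · intro h
    have h2 : A3 n * (A3 n * oneTensor v * A3 n * (A3 n * tensorOne u * A3 n)) * A3 n
        = A3 n * (A3 n * tensorOne u * A3 n * (A3 n * oneTensor v * A3 n)) * A3 n := by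
      rw [h]
    simpa [mul_assoc, A3_cancel, A3_mul_self] using h2.symm
  · intro h
    calc A3 n * oneTensor v * A3 n * (A3 n * tensorOne u * A3 n)
        = A3 n * (oneTensor v * (A3 n * A3 n) * tensorOne u) * A3 n := by
          simp [mul_assoc, A3_cancel, A3_mul_self]
      _ = A3 n * (tensorOne u * (A3 n * A3 n) * oneTensor v) * A3 n := by
          simp only [A3_mul_self, mul_one, h]
      _ = A3 n * tensorOne u * A3 n * (A3 n * oneTensor v * A3 n) := by
          simp [mul_assoc, A3_cancel, A3_mul_self]

theorem stmt_8 (n : ℕ) (hn : 1 ≤ n) (u v : Equiv.Perm (Fin n × Fin n)) :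
    Bicompatible u v ↔ Bicompatible (antitr u) (antitr v) := by
  unfold Bicompatible
  rw [compatible_antitr, compatible_antitr]
  tauto
end

section
/- Let n ≥ 1 and let P ⊆ [n]. Define R_P ≤ S([n]^2) as the set of u ∈ S([n]^2) such that (1) u({k} × ([n]∖P)) = {k} × ([n]∖P) for each k ∈ P, and (2) u(k,j) = (k,j) whenever k ∈ [n]∖P or j ∈ P. Define Ř_P ≤ S([n]^2) as the set of u ∈ S([n]^2) for which (1) there exists σ ∈ S([n]∖P) with u(k,j) = (k, σ(j)) for all k,j ∈ [n]∖P, and (2) u(k,j) = (k,j) whenever k ∈ P or j ∈ P. Then the subgroup of S([n]^2) generated by Ř_P ∪ R_P is a bicompatible subgroup, and it is isomorphic to the direct product of |P|+1 copies of the symmetric group S_{n−|P|}. -/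
/-- The subgroup-membership condition defining `R_P`: `u` leaves each set
`{k} × ([n] ∖ P)` (for `k ∈ P`) invariant, and fixes `(k,j)` whenever
`k ∉ P` or `j ∈ P`. -/
def memRP {n : ℕ} (P : Finset (Fin n)) (u : Equiv.Perm (Fin n × Fin n)) : Prop :=
  (∀ k ∈ P, ⇑u '' {p : Fin n × Fin n | p.1 = k ∧ p.2 ∉ P} =
      {p : Fin n × Fin n | p.1 = k ∧ p.2 ∉ P}) ∧
  ∀ p : Fin n × Fin n, (p.1 ∉ P ∨ p.2 ∈ P) → u p = p

/-- The subgroup-membership condition defining `Ř_P`: there is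
`σ ∈ S([n] ∖ P)` with `u(k,j) = (k, σ(j))` for `k, j ∉ P`, and `u` fixes
`(k,j)` whenever `k ∈ P` or `j ∈ P`. -/
def memCheckRP {n : ℕ} (P : Finset (Fin n)) (u : Equiv.Perm (Fin n × Fin n)) : Prop :=
  (∃ σ : Equiv.Perm {x : Fin n // x ∉ P},
    ∀ (k j : Fin n) (hk : k ∉ P) (hj : j ∉ P), u (k, j) = (k, (σ ⟨j, hj⟩).val)) ∧
  ∀ p : Fin n × Fin n, (p.1 ∈ P ∨ p.2 ∈ P) → u p = p

namespace Stmt9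

variable {n : ℕ} (P : Finset (Fin n))

/-- Equivalence between `Fin (n - |P|)` and the complement of `P`. -/
noncomputable def eQ : Fin (n - P.card) ≃ {x : Fin n // x ∉ P} :=
  (Fintype.equivFinOfCardEq (by
    simp [Fintype.card_subtype_compl])).symm

/-- Index of a point of `Fin n` in `Fin (|P|+1)`: points of `P` get their own
index, all points outside `P` share the last index. -/
noncomputable def idx (k : Fin n) : Fin (P.card + 1) :=
  if h : k ∈ P then (P.equivFin ⟨k, h⟩).castSucc else Fin.last _

/-- The embedding of `S_{n-|P|}^{|P|+1}` into `S([n]²)`. -/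
noncomputable def Phi : (Fin (P.card + 1) → Equiv.Perm (Fin (n - P.card))) →*
    Equiv.Perm (Fin n × Fin n) where
  toFun g := Equiv.prodCongrRight fun k => (g (idx P k)).extendDomain (eQ P)
  map_one' := Equiv.ext fun p => by
    obtain ⟨k, j⟩ := p
    simp [Equiv.prodCongrRight_apply]
  map_mul' g h := Equiv.ext fun p => by
    obtain ⟨k, j⟩ := p
    simp [Equiv.prodCongrRight_apply, Equiv.Perm.mul_apply,
      ← Equiv.Perm.extendDomain_mul]

lemma Phi_apply (g : Fin (P.card + 1) → Equiv.Perm (Fin (n - P.card))) (k j : Fin n) :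
    Phi P g (k, j) = (k, (g (idx P k)).extendDomain (eQ P) j) := rfl

lemma extend_fix (σ : Equiv.Perm (Fin (n - P.card))) {j : Fin n} (hj : j ∈ P) :
    σ.extendDomain (eQ P) j = j :=
  Equiv.Perm.extendDomain_apply_not_subtype σ (eQ P) (by simp [hj])

lemma extend_not_mem (σ : Equiv.Perm (Fin (n - P.card))) {j : Fin n} (hj : j ∉ P) :
    σ.extendDomain (eQ P) j ∉ P := by
  rw [Equiv.Perm.extendDomain_apply_subtype σ (eQ P) hj]
  exact ((eQ P) _).2

/-- The common form of all elements of the closure: `(k,j) ↦ (k, f k j)` with each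
`f k` fixing `P` pointwise and `f` constant outside `P`. -/
def goodForm (u : Equiv.Perm (Fin n × Fin n)) : Prop :=
  ∃ f : Fin n → Equiv.Perm (Fin n),
    (∀ k j, u (k, j) = (k, f k j)) ∧ (∀ k, ∀ j ∈ P, f k j = j) ∧
    ∀ ⦃k k'⦄, k ∉ P → k' ∉ P → f k = f k'

lemma fixes_compl {f : Equiv.Perm (Fin n)} (hf : ∀ j ∈ P, f j = j) {y : Fin n}
    (hy : y ∉ P) : f y ∉ P := by
  intro h
  have h2 : f (f y) = f y := hf _ h
  have h3 : f y = y := f.injective h2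
  exact hy (h3 ▸ h)

lemma compatible_of_goodForm {u v : Equiv.Perm (Fin n × Fin n)}
    (hu : goodForm P u) (hv : goodForm P v) : Compatible u v := by
  obtain ⟨f, hf, hfP, hfc⟩ := hu
  obtain ⟨g, hg, hgP, hgc⟩ := hv
  have key : ∀ x y, f (g x y) = f y := by
    intro x y
    by_cases hy : y ∈ P
    · rw [hgP x y hy]
    · exact hfc (fixes_compl P (hgP x) hy) hy
  show tensorOne v * oneTensor u = oneTensor u * tensorOne v
  refine Equiv.ext fun p => ?_
  obtain ⟨x, y, z⟩ := p
  show tensorOne v (oneTensor u (x, y, z)) = oneTensor u (tensorOne v (x, y, z))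
  have h1 : oneTensor u (x, y, z) = (x, y, f y z) := by
    show (x, u (y, z)) = _
    rw [hf]
  have h2 : tensorOne v (x, y, z) = (x, g x y, z) := by
    show ((v (x, y)).1, (v (x, y)).2, z) = _
    rw [hg]
  rw [h1, h2]
  show ((v (x, y)).1, (v (x, y)).2, f y z) = (x, u (g x y, z))
  rw [hg, hf, key]

lemma goodForm_Phi (g : Fin (P.card + 1) → Equiv.Perm (Fin (n - P.card))) :
    goodForm P (Phi P g) := by
  refine ⟨fun k => (g (idx P k)).extendDomain (eQ P), fun k j => rfl,
    fun k j hj => extend_fix P _ hj, fun k k' hk hk' => ?_⟩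
  simp only [idx, dif_neg hk, dif_neg hk']

lemma Phi_injective : Function.Injective (Phi P) := by
  intro g h hgh
  have key : ∀ k : Fin n, g (idx P k) = h (idx P k) := by
    intro k
    have e1 : (g (idx P k)).extendDomain (eQ P) = (h (idx P k)).extendDomain (eQ P) := by
      refine Equiv.ext fun j => ?_
      have := congrFun (congrArg (fun (w : Equiv.Perm (Fin n × Fin n)) (p : Fin n × Fin n)
        => w p) hgh) (k, j)
      simpa [Phi_apply, Prod.ext_iff] using this
    exact Equiv.Perm.extendDomainHom_injective (eQ P) e1
  funext i
  induction i using Fin.lastCases with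
  | last =>
    by_cases hQ : ∃ k : Fin n, k ∉ P
    · obtain ⟨k, hk⟩ := hQ
      have := key k
      unfold idx at this
      rwa [dif_neg hk] at this
    · push_neg at hQ
      have hP : P = Finset.univ := Finset.eq_univ_iff_forall.mpr hQ
      have h0 : n - P.card = 0 := by simp [hP]
      haveI : Subsingleton (Fin (n - P.card)) := by rw [h0]; infer_instance
      exact Subsingleton.elim _ _
  | cast t =>
    have hk : ((P.equivFin.symm t : ↥P) : Fin n) ∈ P := (P.equivFin.symm t).2
    have := key (P.equivFin.symm t : ↥P)
    unfold idx at this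
    rw [dif_pos hk] at this
    simpa using this

/-- Elements `Φ g` with `g` supported on the last index lie in `Ř_P`. -/
lemma memCheckRP_Phi (g : Fin (P.card + 1) → Equiv.Perm (Fin (n - P.card)))
    (hg : ∀ i, i ≠ Fin.last P.card → g i = 1) : memCheckRP P (Phi P g) := by
  constructor
  · refine ⟨(eQ P).permCongr (g (Fin.last _)), fun k j hk hj => ?_⟩
    rw [Phi_apply]
    simp only [idx, dif_neg hk]
    rw [Equiv.Perm.extendDomain_apply_subtype (g (Fin.last P.card)) (eQ P) hj]
    rfl
  · rintro ⟨k, j⟩ (hk | hj)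
    · rw [Phi_apply]
      unfold idx
      rw [dif_pos hk, hg _ (Fin.castSucc_lt_last _).ne]
      simp
    · rw [Phi_apply, extend_fix P _ hj]

/-- Elements `Φ g` with `g` trivial on the last index lie in `R_P`. -/
lemma memRP_Phi (g : Fin (P.card + 1) → Equiv.Perm (Fin (n - P.card)))
    (hg : g (Fin.last _) = 1) : memRP P (Phi P g) := by
  constructor
  · intro k hk
    apply Set.ext
    intro q
    constructor
    · rintro ⟨⟨a', b'⟩, ⟨hp1, hp2⟩, rfl⟩
      exact ⟨hp1, extend_not_mem P _ hp2⟩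
    · rintro ⟨hq1, hq2⟩
      obtain ⟨a, b⟩ := q
      refine ⟨(Phi P g⁻¹) (a, b), ⟨hq1, extend_not_mem P _ hq2⟩, ?_⟩
      rw [map_inv]
      exact Equiv.apply_symm_apply _ _
  · rintro ⟨k, j⟩ (hk | hj)
    · rw [Phi_apply]
      unfold idx
      rw [dif_neg hk, hg]
      simp
    · rw [Phi_apply, extend_fix P _ hj]

lemma mem_S {u : Equiv.Perm (Fin n × Fin n)} (hu : memRP P u) {k : Fin n} (hk : k ∈ P)
    {j : Fin n} (hj : j ∉ P) : (u (k, j)).1 = k ∧ (u (k, j)).2 ∉ P := by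
  have h := hu.1 k hk
  have hmem : u (k, j) ∈ (⇑u '' {p : Fin n × Fin n | p.1 = k ∧ p.2 ∉ P}) :=
    ⟨(k, j), ⟨rfl, hj⟩, rfl⟩
  rw [h] at hmem
  exact hmem

/-- For `u ∈ R_P` and `k ∈ P`, the permutation of `[n] ∖ P` induced by `u` on the
fiber over `k`. -/
noncomputable def sigmaOf {u : Equiv.Perm (Fin n × Fin n)} (hu : memRP P u) (x : ↥P) :
    Equiv.Perm {x : Fin n // x ∉ P} :=
  Equiv.ofBijective (fun j => ⟨(u ((x : Fin n), j.val)).2, (mem_S P hu x.2 j.2).2⟩)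
    (Finite.injective_iff_bijective.mp (fun j j' h => by
      have h1 := (mem_S P hu x.2 j.2).1
      have h2 := (mem_S P hu x.2 j'.2).1
      have h3 : u ((x : Fin n), j.val) = u ((x : Fin n), j'.val) :=
        Prod.ext (h1.trans h2.symm) (congrArg Subtype.val h)
      have h4 := u.injective h3
      exact Subtype.ext (congrArg Prod.snd h4)))

lemma range_eq_closure :
    (Phi P).range = Subgroup.closure {u | memCheckRP P u ∨ memRP P u} := by
  apply le_antisymm
  · rintro w hw
    obtain ⟨g, rfl⟩ := MonoidHom.mem_range.mp hw
    set gP := Function.update g (Fin.last P.card) 1 with hgPdef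
    set gQ := (fun i => if i = Fin.last P.card then g i else 1 :
      Fin (P.card + 1) → Equiv.Perm (Fin (n - P.card))) with hgQdef
    have hsplit : g = gP * gQ := by
      funext i
      by_cases hi : i = Fin.last P.card
      · subst hi
        simp [hgPdef, hgQdef]
      · simp [hgPdef, hgQdef, Function.update_of_ne hi, hi]
    rw [hsplit, map_mul]
    refine mul_mem (Subgroup.subset_closure ?_) (Subgroup.subset_closure ?_)
    · exact Or.inr (memRP_Phi P gP (by simp [hgPdef]))
    · exact Or.inl (memCheckRP_Phi P gQ (fun i hi => by simp [hgQdef, hi]))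
  · rw [Subgroup.closure_le]
    rintro u (⟨⟨σ, hσ⟩, hfix⟩ | hu)
    · refine ⟨fun i => if i = Fin.last P.card then (eQ P).symm.permCongr σ else 1, ?_⟩
      refine Equiv.ext fun p => ?_
      obtain ⟨k, j⟩ := p
      by_cases hk : k ∈ P
      · rw [Phi_apply]
        unfold idx
        rw [dif_pos hk, if_neg (Fin.castSucc_lt_last _).ne]
        rw [hfix (k, j) (Or.inl hk)]
        simp
      · by_cases hj : j ∈ P
        · rw [Phi_apply, extend_fix P _ hj, hfix (k, j) (Or.inr hj)]
        · rw [Phi_apply]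
          simp only [idx, dif_neg hk, if_pos rfl, if_true]
          rw [hσ k j hk hj,
            Equiv.Perm.extendDomain_apply_subtype ((eQ P).symm.permCongr σ) (eQ P) hj]
          simp
    · refine ⟨fun i => Fin.lastCases 1
        (fun t => (eQ P).symm.permCongr (sigmaOf P hu (P.equivFin.symm t))) i, ?_⟩
      refine Equiv.ext fun p => ?_
      obtain ⟨k, j⟩ := p
      by_cases hj : j ∈ P
      · rw [Phi_apply, extend_fix P _ hj, hu.2 (k, j) (Or.inr hj)]
      · by_cases hk : k ∈ P
        · rw [Phi_apply]
          unfold idx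
          rw [dif_pos hk]
          rw [show (Fin.lastCases 1
              (fun t => (eQ P).symm.permCongr (sigmaOf P hu (P.equivFin.symm t)))
              ((P.equivFin ⟨k, hk⟩).castSucc) : Equiv.Perm (Fin (n - P.card))) =
              (eQ P).symm.permCongr (sigmaOf P hu (P.equivFin.symm (P.equivFin ⟨k, hk⟩)))
            from Fin.lastCases_castSucc _]
          rw [Equiv.symm_apply_apply]
          rw [Equiv.Perm.extendDomain_apply_subtype
            ((eQ P).symm.permCongr (sigmaOf P hu ⟨k, hk⟩)) (eQ P) hj]
          have : ((eQ P) (((eQ P).symm.permCongr (sigmaOf P hu ⟨k, hk⟩))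
              ((eQ P).symm ⟨j, hj⟩)) : Fin n) = (sigmaOf P hu ⟨k, hk⟩ ⟨j, hj⟩ : Fin n) := by
            simp [Equiv.permCongr_apply]
          rw [this]
          have hS := mem_S P hu hk hj
          exact Prod.ext hS.1.symm rfl
        · rw [Phi_apply]
          unfold idx
          rw [dif_neg hk]
          rw [show (Fin.lastCases 1
              (fun t => (eQ P).symm.permCongr (sigmaOf P hu (P.equivFin.symm t)))
              (Fin.last P.card) : Equiv.Perm (Fin (n - P.card))) = 1
            from Fin.lastCases_last]
          rw [hu.2 (k, j) (Or.inl hk)]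
          simp

end Stmt9

theorem stmt_9 (n : ℕ) (hn : 1 ≤ n) (P : Finset (Fin n)) :
    (∀ u ∈ Subgroup.closure {u | memCheckRP P u ∨ memRP P u},
      ∀ v ∈ Subgroup.closure {u | memCheckRP P u ∨ memRP P u},
        Compatible u v ∧ Compatible v u) ∧
    Nonempty
      ((Subgroup.closure {u | memCheckRP P u ∨ memRP P u} :
          Subgroup (Equiv.Perm (Fin n × Fin n))) ≃*
        (Fin (P.card + 1) → Equiv.Perm (Fin (n - P.card)))) := by
  constructor
  · intro u hu v hv
    rw [← Stmt9.range_eq_closure P] at hu hv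
    obtain ⟨gu, rfl⟩ := MonoidHom.mem_range.mp hu
    obtain ⟨gv, rfl⟩ := MonoidHom.mem_range.mp hv
    exact ⟨Stmt9.compatible_of_goodForm P (Stmt9.goodForm_Phi P gu) (Stmt9.goodForm_Phi P gv),
      Stmt9.compatible_of_goodForm P (Stmt9.goodForm_Phi P gv) (Stmt9.goodForm_Phi P gu)⟩
  · exact ⟨(MulEquiv.subgroupCongr (Stmt9.range_eq_closure P).symm).trans
      (MonoidHom.ofInjective (Stmt9.Phi_injective P)).symm⟩
end

section
/- Let n ≥ 1, let i, j ∈ [n] with i ≠ j, let u ∈ R_{i,j} and v ∈ R_{j,i}. Then u and v are bicompatible. Here, for k ∈ [n], R_k ≤ S([n]^2) is the set of permutations u with u({k} × ([n]∖{k})) = {k} × ([n]∖{k}) and u(x,y) = (x,y) whenever x ≠ k or y = k, and R_{k,ℓ} := {u ∈ R_k : u(k,ℓ) = (k,ℓ)}. -/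
/-- Membership in `R_k`: `u` leaves `{k} × ([n] ∖ {k})` invariant and fixes
`(x,y)` whenever `x ≠ k` or `y = k`. -/
def memR {n : ℕ} (k : Fin n) (u : Equiv.Perm (Fin n × Fin n)) : Prop :=
  (⇑u '' {p : Fin n × Fin n | p.1 = k ∧ p.2 ≠ k} =
      {p : Fin n × Fin n | p.1 = k ∧ p.2 ≠ k}) ∧
  ∀ p : Fin n × Fin n, (p.1 ≠ k ∨ p.2 = k) → u p = p

/-- Membership in `R_{k,ℓ}`. -/
def memRij {n : ℕ} (k l : Fin n) (u : Equiv.Perm (Fin n × Fin n)) : Prop :=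
  memR k u ∧ u (k, l) = (k, l)

lemma tensorOne_apply {n : ℕ} (u : Equiv.Perm (Fin n × Fin n))
    (p : Fin n × Fin n × Fin n) :
    tensorOne u p = ((u (p.1, p.2.1)).1, (u (p.1, p.2.1)).2, p.2.2) := rfl

lemma oneTensor_apply {n : ℕ} (u : Equiv.Perm (Fin n × Fin n))
    (p : Fin n × Fin n × Fin n) :
    oneTensor u p = (p.1, u p.2) := rfl

lemma key {n : ℕ} (i j : Fin n) (hij : i ≠ j)
    (u v : Equiv.Perm (Fin n × Fin n))
    (hu : memRij i j u) (hv : memRij j i v) : Compatible u v := by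
  obtain ⟨⟨huim, hufix⟩, huij⟩ := hu
  obtain ⟨⟨hvim, hvfix⟩, hvji⟩ := hv
  have huim' : ∀ y : Fin n, y ≠ i → (u (i, y)).1 = i ∧ (u (i, y)).2 ≠ i := by
    intro y hy
    have : u (i, y) ∈ {p : Fin n × Fin n | p.1 = i ∧ p.2 ≠ i} := by
      rw [← huim]; exact ⟨(i, y), ⟨rfl, hy⟩, rfl⟩
    exact this
  have hvim' : ∀ y : Fin n, y ≠ j → (v (j, y)).1 = j ∧ (v (j, y)).2 ≠ j := by
    intro y hy
    have : v (j, y) ∈ {p : Fin n × Fin n | p.1 = j ∧ p.2 ≠ j} := by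
      rw [← hvim]; exact ⟨(j, y), ⟨rfl, hy⟩, rfl⟩
    exact this
  apply Equiv.ext
  rintro ⟨x, y, z⟩
  simp only [Equiv.Perm.mul_apply, tensorOne_apply, oneTensor_apply]
  -- goal: ((v (x,(u (y,z)).1)).1, (v (x,(u (y,z)).1)).2, (u (y,z)).2)
  --     = ((v (x,y)).1, u ((v (x,y)).2, z))
  by_cases hyi : y = i
  · subst hyi
    have hvxy : v (x, y) = (x, y) := by
      by_cases hxj : x = j
      · subst hxj; exact hvji
      · exact hvfix (x, y) (Or.inl hxj)
    by_cases hzy : z = y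
    · subst hzy
      rw [hufix (z, z) (Or.inr rfl), hvxy, hufix (z, z) (Or.inr rfl)]
    · have h1 : (u (y, z)).1 = y := (huim' z hzy).1
      rw [h1, hvxy]
      exact Prod.ext rfl (Prod.ext h1.symm rfl)
  · have huyz : u (y, z) = (y, z) := hufix (y, z) (Or.inl hyi)
    rw [huyz]
    have hv2 : (v (x, y)).2 ≠ i ∨ z = i := by
      by_cases hxj : x = j
      · subst hxj
        by_cases hyx : y = x
        · subst hyx
          rw [hvfix (y, y) (Or.inr rfl)]
          exact Or.inl hyi
        · left
          intro h2
          have h3 : v (x, y) = (x, i) := Prod.ext (hvim' y hyx).1 h2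
          have h4 := v.injective (h3.trans hvji.symm)
          exact hyi (congrArg Prod.snd h4)
      · rw [hvfix (x, y) (Or.inl hxj)]
        exact Or.inl hyi
    rcases hv2 with h2 | h2
    · rw [hufix ((v (x, y)).2, z) (Or.inl h2)]
    · subst h2
      rw [hufix ((v (x, y)).2, z) (Or.inr rfl)]

theorem stmt_10 (n : ℕ) (hn : 1 ≤ n) (i j : Fin n) (hij : i ≠ j)
    (u v : Equiv.Perm (Fin n × Fin n))
    (hu : memRij i j u) (hv : memRij j i v) :
    Compatible u v ∧ Compatible v u := by
  exact ⟨key i j hij u v hu hv, key j i hij.symm v u hv hu⟩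
end

section
/- Let m ≥ 1, let n = 2m, let C be an m-element subset of [2m] with complement B = [2m]∖C, and fix enumerations C = {c_1,…,c_m} and B = {b_1,…,b_m}. Let c_0 ∈ S([2m]^2) be the permutation mapping (c_i, y) to (c_{i+1 mod m}, y) for each y ∈ C and i ∈ [m] and fixing every other point, and let r_0 ∈ S([2m]^2) be the permutation mapping (x, b_i) to (x, b_{i+1 mod m}) for each x ∈ B and i ∈ [m] and fixing every other point. Let N be the subgroup of S([2m]^2) generated by c_0, r_0, and all permutations of [2m]² that map C × B onto itself and fix every point outside C × B. Then N is a bicompatible subgroup of S([2m]^2) and is isomorphic to S_{m²} × (ℤ/mℤ) × (ℤ/mℤ). -/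
/-- The generating set of `N(B,C)`: the two permutations `c₀`, `r₀` together
with all permutations of `[2m]²` that map `C × B` onto itself and fix every
point outside `C × B` (where `B = [2m] ∖ C`). -/
def genSetN {m : ℕ} (C : Finset (Fin (2 * m)))
    (c0 r0 : Equiv.Perm (Fin (2 * m) × Fin (2 * m))) :
    Set (Equiv.Perm (Fin (2 * m) × Fin (2 * m))) :=
  {c0, r0} ∪
    {w | (⇑w '' {p : Fin (2 * m) × Fin (2 * m) | p.1 ∈ C ∧ p.2 ∉ C} =
            {p : Fin (2 * m) × Fin (2 * m) | p.1 ∈ C ∧ p.2 ∉ C}) ∧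
         ∀ p : Fin (2 * m) × Fin (2 * m), ¬(p.1 ∈ C ∧ p.2 ∉ C) → w p = p}

namespace Stmt14Aux

/-- The key invariance properties shared by all elements of `N`. -/
structure GoodP {n : ℕ} (C : Finset (Fin n)) (v : Equiv.Perm (Fin n × Fin n)) : Prop where
  mem1 : ∀ p : Fin n × Fin n, (v p).1 ∈ C ↔ p.1 ∈ C
  mem2 : ∀ p : Fin n × Fin n, (v p).2 ∈ C ↔ p.2 ∈ C
  fix2 : ∀ p : Fin n × Fin n, p.2 ∈ C → (v p).2 = p.2
  fix1 : ∀ p : Fin n × Fin n, p.1 ∉ C → (v p).1 = p.1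
  dep1 : ∀ x y y' : Fin n, x ∈ C → y ∈ C → y' ∈ C → (v (x, y)).1 = (v (x, y')).1
  dep2 : ∀ x x' y : Fin n, x ∉ C → x' ∉ C → y ∉ C → (v (x, y)).2 = (v (x', y)).2

variable {n : ℕ} {C : Finset (Fin n)}

lemma goodP_one : GoodP C 1 :=
  ⟨fun _ => Iff.rfl, fun _ => Iff.rfl, fun _ _ => rfl, fun _ _ => rfl,
   fun _ _ _ _ _ _ => rfl, fun _ _ _ _ _ _ => rfl⟩

lemma goodP_mul {u v : Equiv.Perm (Fin n × Fin n)} (hv : GoodP C v) (hu : GoodP C u) :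
    GoodP C (v * u) where
  mem1 p := by rw [Equiv.Perm.mul_apply, hv.mem1, hu.mem1]
  mem2 p := by rw [Equiv.Perm.mul_apply, hv.mem2, hu.mem2]
  fix2 p hp := by
    rw [Equiv.Perm.mul_apply, hv.fix2 _ (by rw [hu.mem2]; exact hp), hu.fix2 _ hp]
  fix1 p hp := by
    rw [Equiv.Perm.mul_apply, hv.fix1 _ (by rw [hu.mem1]; exact hp), hu.fix1 _ hp]
  dep1 x y y' hx hy hy' := by
    have h1 : u (x, y) = ((u (x, y)).1, y) := Prod.ext rfl (hu.fix2 (x, y) hy)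
    have h2 : u (x, y') = ((u (x, y')).1, y') := Prod.ext rfl (hu.fix2 (x, y') hy')
    have h3 : (u (x, y)).1 = (u (x, y')).1 := hu.dep1 x y y' hx hy hy'
    have hmem : (u (x, y)).1 ∈ C := (hu.mem1 (x, y)).mpr hx
    calc (v (u (x, y))).1 = (v ((u (x, y)).1, y)).1 := by rw [← h1]
      _ = (v ((u (x, y)).1, y')).1 := hv.dep1 _ y y' hmem hy hy'
      _ = (v (u (x, y'))).1 := by rw [h3, ← h2]
  dep2 x x' y hx hx' hy := by
    have h1 : u (x, y) = (x, (u (x, y)).2) := Prod.ext (hu.fix1 (x, y) hx) rfl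
    have h2 : u (x', y) = (x', (u (x', y)).2) := Prod.ext (hu.fix1 (x', y) hx') rfl
    have h3 : (u (x, y)).2 = (u (x', y)).2 := hu.dep2 x x' y hx hx' hy
    have hmem : (u (x, y)).2 ∉ C := fun h => hy ((hu.mem2 (x, y)).mp h)
    calc (v (u (x, y))).2 = (v (x, (u (x, y)).2)).2 := by rw [← h1]
      _ = (v (x', (u (x, y)).2)).2 := hv.dep2 x x' _ hx hx' hmem
      _ = (v (u (x', y))).2 := by rw [h3, ← h2]

lemma goodP_pow {u : Equiv.Perm (Fin n × Fin n)} (hu : GoodP C u) (k : ℕ) :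
    GoodP C (u ^ k) := by
  induction k with
  | zero => simpa using goodP_one
  | succ k ih => rw [pow_succ]; exact goodP_mul ih hu

lemma compatible_of_good {u v : Equiv.Perm (Fin n × Fin n)}
    (hu : GoodP C u) (hv : GoodP C v) : Compatible u v := by
  apply Equiv.ext
  rintro ⟨x, y, z⟩
  show tensorOne v (oneTensor u (x, y, z)) = oneTensor u (tensorOne v (x, y, z))
  show ((v (x, (u (y, z)).1)).1, (v (x, (u (y, z)).1)).2, (u (y, z)).2)
      = ((v (x, y)).1, (u ((v (x, y)).2, z)).1, (u ((v (x, y)).2, z)).2)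
  refine Prod.ext ?_ (Prod.ext ?_ ?_)
  · by_cases hx : x ∈ C
    · by_cases hy : y ∈ C
      · exact hv.dep1 x _ y hx ((hu.mem1 (y, z)).mpr hy) hy
      · rw [hu.fix1 (y, z) hy]
    · rw [hv.fix1 (x, (u (y, z)).1) hx, hv.fix1 (x, y) hx]
  · by_cases hy : y ∈ C
    · rw [hv.fix2 (x, y) hy]
      exact hv.fix2 (x, (u (y, z)).1) ((hu.mem1 (y, z)).mpr hy)
    · rw [hu.fix1 (y, z) hy]
      exact (hu.fix1 ((v (x, y)).2, z) (fun h => hy ((hv.mem2 (x, y)).mp h))).symm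
  · by_cases hy : y ∈ C
    · rw [hv.fix2 (x, y) hy]
    · have hy' : (v (x, y)).2 ∉ C := fun h => hy ((hv.mem2 (x, y)).mp h)
      by_cases hz : z ∈ C
      · rw [hu.fix2 (y, z) hz, hu.fix2 (_, z) hz]
      · exact hu.dep2 y _ z hy hy' hz

/-- A fixed point of a permutation is a fixed point of all its powers. -/
lemma fixpow {α : Type*} (f : Equiv.Perm α) (p : α) (h : f p = p) (k : ℕ) :
    (f ^ k) p = p := by
  induction k with
  | zero => rfl
  | succ k ih => rw [pow_succ, Equiv.Perm.mul_apply, h, ih]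

end Stmt14Aux

open Fin.NatCast in
open Stmt14Aux in
theorem stmt_14 (m : ℕ) (hm : 1 ≤ m) [NeZero m]
    (C : Finset (Fin (2 * m))) (hC : C.card = m)
    (c b : Fin m → Fin (2 * m))
    (hc : Function.Injective c) (hcC : ∀ i, c i ∈ C) (hcS : ∀ x ∈ C, ∃ i, c i = x)
    (hb : Function.Injective b) (hbB : ∀ i, b i ∉ C) (hbS : ∀ x ∉ C, ∃ i, b i = x)
    (c0 r0 : Equiv.Perm (Fin (2 * m) × Fin (2 * m)))
    (hc0 : ∀ (i : Fin m) (y : Fin (2 * m)), y ∈ C → c0 (c i, y) = (c (i + 1), y))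
    (hc0fix : ∀ p : Fin (2 * m) × Fin (2 * m), (p.1 ∉ C ∨ p.2 ∉ C) → c0 p = p)
    (hr0 : ∀ (x : Fin (2 * m)) (i : Fin m), x ∉ C → r0 (x, b i) = (x, b (i + 1)))
    (hr0fix : ∀ p : Fin (2 * m) × Fin (2 * m), (p.1 ∈ C ∨ p.2 ∈ C) → r0 p = p) :
    (∀ u ∈ Subgroup.closure (genSetN C c0 r0),
      ∀ v ∈ Subgroup.closure (genSetN C c0 r0),
        Compatible u v ∧ Compatible v u) ∧
    Nonempty
      ((Subgroup.closure (genSetN C c0 r0) :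
          Subgroup (Equiv.Perm (Fin (2 * m) × Fin (2 * m)))) ≃*
        (Equiv.Perm (Fin (m * m)) ×
          Multiplicative (ZMod m) × Multiplicative (ZMod m))) := by
  classical
  -- basic facts about c0
  have snd_c0 : ∀ p : Fin (2 * m) × Fin (2 * m), (c0 p).2 = p.2 := by
    rintro ⟨x, y⟩
    by_cases hx : x ∈ C
    · by_cases hy : y ∈ C
      · obtain ⟨i, rfl⟩ := hcS x hx
        rw [hc0 i y hy]
      · rw [hc0fix (x, y) (Or.inr hy)]
    · rw [hc0fix (x, y) (Or.inl hx)]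
  have good_c0 : GoodP C c0 := by
    refine ⟨?_, ?_, ?_, ?_, ?_, ?_⟩
    · rintro ⟨x, y⟩
      by_cases hx : x ∈ C
      · by_cases hy : y ∈ C
        · obtain ⟨i, rfl⟩ := hcS x hx
          rw [hc0 i y hy]
          simpa [hcC] using hcC i
        · rw [hc0fix (x, y) (Or.inr hy)]
      · rw [hc0fix (x, y) (Or.inl hx)]
    · intro p; rw [snd_c0]
    · intro p _; exact snd_c0 p
    · rintro ⟨x, y⟩ hx; rw [hc0fix (x, y) (Or.inl hx)]
    · intro x y y' hx hy hy'
      obtain ⟨i, rfl⟩ := hcS x hx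
      rw [hc0 i y hy, hc0 i y' hy']
    · intro x x' y hx hx' hy
      rw [hc0fix (x, y) (Or.inr hy), hc0fix (x', y) (Or.inr hy)]
  -- basic facts about r0
  have fst_r0 : ∀ p : Fin (2 * m) × Fin (2 * m), (r0 p).1 = p.1 := by
    rintro ⟨x, y⟩
    by_cases hx : x ∈ C
    · rw [hr0fix (x, y) (Or.inl hx)]
    · by_cases hy : y ∈ C
      · rw [hr0fix (x, y) (Or.inr hy)]
      · obtain ⟨i, rfl⟩ := hbS y hy
        rw [hr0 x i hx]
  have good_r0 : GoodP C r0 := by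
    refine ⟨?_, ?_, ?_, ?_, ?_, ?_⟩
    · intro p; rw [fst_r0]
    · rintro ⟨x, y⟩
      by_cases hx : x ∈ C
      · rw [hr0fix (x, y) (Or.inl hx)]
      · by_cases hy : y ∈ C
        · rw [hr0fix (x, y) (Or.inr hy)]
        · obtain ⟨i, rfl⟩ := hbS y hy
          rw [hr0 x i hx]
          simp [hbB i, hbB (i + 1)]
    · rintro ⟨x, y⟩ hy; rw [hr0fix (x, y) (Or.inr hy)]
    · intro p _; exact fst_r0 p
    · intro x y y' hx hy hy'
      rw [hr0fix (x, y) (Or.inr hy), hr0fix (x, y') (Or.inr hy')]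
    · intro x x' y hx hx' hy
      obtain ⟨i, rfl⟩ := hbS y hy
      rw [hr0 x i hx, hr0 x' i hx']
  -- powers of c0 and r0
  have powc : ∀ (k : ℕ) (i : Fin m) (y : Fin (2 * m)), y ∈ C →
      (c0 ^ k) (c i, y) = (c (i + (k : Fin m)), y) := by
    intro k
    induction k with
    | zero => intro i y hy; simp
    | succ k ih =>
      intro i y hy
      rw [pow_succ', Equiv.Perm.mul_apply, ih i y hy, hc0 _ y hy]
      congr 2
      push_cast
      simp only [Nat.cast_succ, add_assoc]
  have powr : ∀ (k : ℕ) (x : Fin (2 * m)) (i : Fin m), x ∉ C →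
      (r0 ^ k) (x, b i) = (x, b (i + (k : Fin m))) := by
    intro k
    induction k with
    | zero => intro x i hx; simp
    | succ k ih =>
      intro x i hx
      rw [pow_succ', Equiv.Perm.mul_apply, ih x i hx, hr0 x _ hx]
      congr 2
      push_cast
      simp only [Nat.cast_succ, add_assoc]
  have c0m : c0 ^ m = 1 := by
    apply Equiv.ext
    rintro ⟨x, y⟩
    by_cases hx : x ∈ C
    · by_cases hy : y ∈ C
      · obtain ⟨i, rfl⟩ := hcS x hx
        rw [powc m i y hy]
        simp
      · rw [fixpow c0 (x, y) (hc0fix (x, y) (Or.inr hy)) m]; rfl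
    · rw [fixpow c0 (x, y) (hc0fix (x, y) (Or.inl hx)) m]; rfl
  have r0m : r0 ^ m = 1 := by
    apply Equiv.ext
    rintro ⟨x, y⟩
    by_cases hx : x ∈ C
    · rw [fixpow r0 (x, y) (hr0fix (x, y) (Or.inl hx)) m]; rfl
    · by_cases hy : y ∈ C
      · rw [fixpow r0 (x, y) (hr0fix (x, y) (Or.inr hy)) m]; rfl
      · obtain ⟨i, rfl⟩ := hbS y hy
        rw [powr m x i hx]
        simp
  -- the equivalence between Fin (m*m) and C × B
  have hgbij : Function.Bijective
      (fun ij : Fin m × Fin m =>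
        (⟨(c ij.1, b ij.2), hcC ij.1, hbB ij.2⟩ :
          {p : Fin (2 * m) × Fin (2 * m) // p.1 ∈ C ∧ p.2 ∉ C})) := by
    constructor
    · rintro ⟨i, j⟩ ⟨i', j'⟩ hij
      have h1 : c i = c i' := congrArg (fun q => q.1.1) hij
      have h2 : b j = b j' := congrArg (fun q => q.1.2) hij
      exact Prod.ext (hc h1) (hb h2)
    · rintro ⟨⟨x, y⟩, hx, hy⟩
      obtain ⟨i, rfl⟩ := hcS x hx
      obtain ⟨j, rfl⟩ := hbS y hy
      exact ⟨(i, j), rfl⟩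
  let e : Fin (m * m) ≃ {p : Fin (2 * m) × Fin (2 * m) // p.1 ∈ C ∧ p.2 ∉ C} :=
    finProdFinEquiv.symm.trans (Equiv.ofBijective _ hgbij)
  let W : Equiv.Perm (Fin (m * m)) →* Equiv.Perm (Fin (2 * m) × Fin (2 * m)) :=
    Equiv.Perm.extendDomainHom e
  have hWfix : ∀ (w : Equiv.Perm (Fin (m * m))) (p : Fin (2 * m) × Fin (2 * m)),
      ¬(p.1 ∈ C ∧ p.2 ∉ C) → W w p = p := fun w p hp =>
    Equiv.Perm.extendDomain_apply_not_subtype w e hp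
  have hWmem : ∀ (w : Equiv.Perm (Fin (m * m))) (p : Fin (2 * m) × Fin (2 * m)),
      (p.1 ∈ C ∧ p.2 ∉ C) → ((W w p).1 ∈ C ∧ (W w p).2 ∉ C) := by
    intro w p hp
    have : W w p = ↑(e (w (e.symm ⟨p, hp⟩))) :=
      Equiv.Perm.extendDomain_apply_subtype w e hp
    rw [this]
    exact (e (w (e.symm ⟨p, hp⟩))).2
  have good_W : ∀ w : Equiv.Perm (Fin (m * m)), GoodP C (W w) := by
    intro w
    refine ⟨?_, ?_, ?_, ?_, ?_, ?_⟩
    · intro p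
      by_cases hp : p.1 ∈ C ∧ p.2 ∉ C
      · simp [(hWmem w p hp).1, hp.1]
      · rw [hWfix w p hp]
    · intro p
      by_cases hp : p.1 ∈ C ∧ p.2 ∉ C
      · simp [(hWmem w p hp).2, hp.2]
      · rw [hWfix w p hp]
    · intro p hp; rw [hWfix w p (fun h => h.2 hp)]
    · intro p hp; rw [hWfix w p (fun h => hp h.1)]
    · intro x y y' hx hy hy'
      rw [hWfix w (x, y) (fun h => h.2 hy), hWfix w (x, y') (fun h => h.2 hy')]
    · intro x x' y hx hx' hy
      rw [hWfix w (x, y) (fun h => hx h.1), hWfix w (x', y) (fun h => hx' h.1)]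
  have hWimage : ∀ w : Equiv.Perm (Fin (m * m)),
      ⇑(W w) '' {p : Fin (2 * m) × Fin (2 * m) | p.1 ∈ C ∧ p.2 ∉ C} =
        {p : Fin (2 * m) × Fin (2 * m) | p.1 ∈ C ∧ p.2 ∉ C} := by
    intro w
    ext q
    constructor
    · rintro ⟨p, hp, rfl⟩
      exact hWmem w p hp
    · intro hq
      refine ⟨W w⁻¹ q, hWmem w⁻¹ q hq, ?_⟩
      have : W w (W w⁻¹ q) = (W w * W w⁻¹) q := rfl
      rw [this, ← map_mul, mul_inv_cancel, map_one]
      rfl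
  -- commutation
  have comm_cr : Commute c0 r0 := by
    apply Equiv.Perm.Disjoint.commute
    intro p
    by_cases h : p.1 ∈ C
    · exact Or.inr (hr0fix p (Or.inl h))
    · exact Or.inl (hc0fix p (Or.inl h))
  have comm_Wc : ∀ w, Commute (W w) c0 := by
    intro w
    apply Equiv.Perm.Disjoint.commute
    intro p
    by_cases hp : p.1 ∈ C ∧ p.2 ∉ C
    · exact Or.inr (hc0fix p (Or.inr hp.2))
    · exact Or.inl (hWfix w p hp)
  have comm_Wr : ∀ w, Commute (W w) r0 := by
    intro w
    apply Equiv.Perm.Disjoint.commute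
    intro p
    by_cases hp : p.1 ∈ C ∧ p.2 ∉ C
    · exact Or.inr (hr0fix p (Or.inl hp.1))
    · exact Or.inl (hWfix w p hp)
  -- the homomorphisms from ZMod m
  let χc : Multiplicative (ZMod m) →* Equiv.Perm (Fin (2 * m) × Fin (2 * m)) :=
    { toFun := fun i => c0 ^ (Multiplicative.toAdd i).val
      map_one' := by simp
      map_mul' := fun a b => by
        show c0 ^ (Multiplicative.toAdd a + Multiplicative.toAdd b).val = _
        rw [ZMod.val_add, ← pow_eq_pow_mod _ c0m, pow_add] }
  let χr : Multiplicative (ZMod m) →* Equiv.Perm (Fin (2 * m) × Fin (2 * m)) :=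
    { toFun := fun i => r0 ^ (Multiplicative.toAdd i).val
      map_one' := by simp
      map_mul' := fun a b => by
        show r0 ^ (Multiplicative.toAdd a + Multiplicative.toAdd b).val = _
        rw [ZMod.val_add, ← pow_eq_pow_mod _ r0m, pow_add] }
  let φ : Equiv.Perm (Fin (m * m)) ×
      Multiplicative (ZMod m) × Multiplicative (ZMod m) →*
      Equiv.Perm (Fin (2 * m) × Fin (2 * m)) :=
    W.noncommCoprod (χc.noncommCoprod χr (fun a b => comm_cr.pow_pow _ _))
      (fun w x => Commute.mul_right ((comm_Wc w).pow_right _) ((comm_Wr w).pow_right _))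
  have φ_apply : ∀ (w : Equiv.Perm (Fin (m * m))) (i j : Multiplicative (ZMod m)),
      φ (w, i, j) = W w * (c0 ^ (Multiplicative.toAdd i).val *
        r0 ^ (Multiplicative.toAdd j).val) := fun _ _ _ => rfl
  -- range of φ equals the closure
  have hrange : φ.range = Subgroup.closure (genSetN C c0 r0) := by
    apply le_antisymm
    · rintro g ⟨⟨w, i, j⟩, rfl⟩
      rw [φ_apply]
      refine mul_mem ?_ (mul_mem (pow_mem ?_ _) (pow_mem ?_ _))
      · exact Subgroup.subset_closure
          (Set.mem_union_right _ ⟨hWimage w, fun p hp => hWfix w p hp⟩)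
      · exact Subgroup.subset_closure (Set.mem_union_left _ (Set.mem_insert _ _))
      · exact Subgroup.subset_closure
          (Set.mem_union_left _ (Set.mem_insert_of_mem _ rfl))
    · rw [Subgroup.closure_le]
      rintro g (hg | hg)
      · rcases hg with rfl | rfl
        · refine ⟨(1, Multiplicative.ofAdd 1, 1), ?_⟩
          rw [φ_apply, map_one, one_mul]
          simp only [toAdd_ofAdd, toAdd_one]
          rw [ZMod.val_zero, pow_zero, mul_one,
            show (1 : ZMod m) = ((1 : ℕ) : ZMod m) from (Nat.cast_one).symm,
            ZMod.val_natCast, ← pow_eq_pow_mod _ c0m, pow_one]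
        · refine ⟨(1, 1, Multiplicative.ofAdd 1), ?_⟩
          rw [φ_apply, map_one, one_mul]
          simp only [toAdd_ofAdd, toAdd_one]
          rw [ZMod.val_zero, pow_zero, one_mul,
            show (1 : ZMod m) = ((1 : ℕ) : ZMod m) from (Nat.cast_one).symm,
            ZMod.val_natCast, ← pow_eq_pow_mod _ r0m, pow_one]
      · obtain ⟨h1, h2⟩ := hg
        have hiff : ∀ p : Fin (2 * m) × Fin (2 * m),
            (p.1 ∈ C ∧ p.2 ∉ C) ↔ ((g p).1 ∈ C ∧ (g p).2 ∉ C) := by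
          intro p
          constructor
          · intro hp
            have : g p ∈ ⇑g '' {p : Fin (2 * m) × Fin (2 * m) | p.1 ∈ C ∧ p.2 ∉ C} :=
              ⟨p, hp, rfl⟩
            rw [h1] at this
            exact this
          · intro hp
            by_contra hnp
            rw [h2 p hnp] at hp
            exact hnp hp
        refine ⟨((Equiv.permCongr e).symm (g.subtypePerm (fun p => (hiff p).symm)), 1, 1), ?_⟩
        rw [φ_apply]
        simp only [toAdd_one, ZMod.val_zero, pow_zero, one_mul, mul_one]
        apply Equiv.ext
        intro p
        by_cases hp : p.1 ∈ C ∧ p.2 ∉ C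
        · have hsub : W (e.permCongr.symm (g.subtypePerm (fun p => (hiff p).symm))) p =
              ↑(e ((e.permCongr.symm (g.subtypePerm (fun p => (hiff p).symm))) (e.symm ⟨p, hp⟩))) :=
            Equiv.Perm.extendDomain_apply_subtype _ e hp
          rw [hsub]
          simp [Equiv.permCongr_symm, Equiv.permCongr_apply, Equiv.symm_symm,
            Equiv.apply_symm_apply, Equiv.Perm.subtypePerm_apply]
        · rw [hWfix _ p hp, h2 p hp]
  -- injectivity of φ
  have hinj : Function.Injective φ := by
    rw [injective_iff_map_eq_one]
    rintro ⟨w, i, j⟩ h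
    rw [φ_apply] at h
    have hival : (Multiplicative.toAdd i).val = 0 := by
      have happ := Equiv.ext_iff.mp h (c 0, c 0)
      rw [Equiv.Perm.mul_apply, Equiv.Perm.mul_apply,
        fixpow r0 (c 0, c 0) (hr0fix (c 0, c 0) (Or.inl (hcC 0))) _,
        powc _ 0 (c 0) (hcC 0),
        hWfix w _ (fun hh => hh.2 (hcC 0))] at happ
      have h1 : c (0 + ((Multiplicative.toAdd i).val : Fin m)) = c 0 :=
        congrArg Prod.fst happ
      have h2 : (((Multiplicative.toAdd i).val : ℕ) : Fin m) = 0 := by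
        have := hc h1
        rwa [zero_add] at this
      have h3 := congrArg Fin.val h2
      rw [Fin.val_natCast, Fin.val_zero] at h3
      rwa [Nat.mod_eq_of_lt (ZMod.val_lt _)] at h3
    have hjval : (Multiplicative.toAdd j).val = 0 := by
      have happ := Equiv.ext_iff.mp h (b 0, b 0)
      rw [Equiv.Perm.mul_apply, Equiv.Perm.mul_apply,
        powr _ (b 0) 0 (hbB 0),
        fixpow c0 (b 0, b (0 + _)) (hc0fix _ (Or.inl (hbB 0))) _,
        hWfix w _ (fun hh => hbB 0 hh.1)] at happ
      have h1 : b (0 + ((Multiplicative.toAdd j).val : Fin m)) = b 0 :=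
        congrArg Prod.snd happ
      have h2 : (((Multiplicative.toAdd j).val : ℕ) : Fin m) = 0 := by
        have := hb h1
        rwa [zero_add] at this
      have h3 := congrArg Fin.val h2
      rw [Fin.val_natCast, Fin.val_zero] at h3
      rwa [Nat.mod_eq_of_lt (ZMod.val_lt _)] at h3
    have hW1 : W w = 1 := by
      rw [hival, hjval, pow_zero, pow_zero, one_mul, mul_one] at h
      exact h
    have hw1 : w = 1 := by
      have := Equiv.Perm.extendDomainHom_injective e (a₁ := w) (a₂ := 1)
      apply this
      rw [map_one]
      exact hW1
    have hi1 : i = 1 := by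
      have : Multiplicative.toAdd i = 0 := (ZMod.val_eq_zero _).mp hival
      exact toAdd_eq_zero.mp this
    have hj1 : j = 1 := by
      have : Multiplicative.toAdd j = 0 := (ZMod.val_eq_zero _).mp hjval
      exact toAdd_eq_zero.mp this
    rw [hw1, hi1, hj1]
    rfl
  -- every element of the closure is Good
  have goodclos : ∀ g ∈ Subgroup.closure (genSetN C c0 r0), GoodP C g := by
    intro g hg
    rw [← hrange] at hg
    obtain ⟨⟨w, i, j⟩, rfl⟩ := hg
    rw [φ_apply]
    exact goodP_mul (good_W w) (goodP_mul (goodP_pow good_c0 _) (goodP_pow good_r0 _))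
  constructor
  · intro u hu v hv
    exact ⟨compatible_of_good (goodclos u hu) (goodclos v hv),
      compatible_of_good (goodclos v hv) (goodclos u hu)⟩
  · exact ⟨(MulEquiv.subgroupCongr hrange.symm).trans (MonoidHom.ofInjective hinj).symm⟩
end

section
/- Let n ≥ 1, let V be a bicompatible subgroup of S([n]^2), let a, b ∈ [n] lie in the same connected component of the graph G_R, let c ∈ [n], and let v ∈ V. Then v(c,a) and v(c,b) lie in the same row of [n]², i.e. the first coordinates of v(c,a) and v(c,b) are equal. -/
/-- The graph `G_R` on `[n]` attached to a subgroup `V ≤ S([n]²)`: distinct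
`a, b` are adjacent iff some `v ∈ V` maps some point of row `a` to a point of
row `b`. -/
def GR {n : ℕ} (V : Subgroup (Equiv.Perm (Fin n × Fin n))) : SimpleGraph (Fin n) where
  Adj a b := a ≠ b ∧ ∃ x y : Fin n, ∃ v ∈ V, v (a, x) = (b, y)
  symm := by
    constructor
    rintro a b ⟨hab, x, y, v, hv, hvab⟩
    refine ⟨hab.symm, y, x, v⁻¹, V.inv_mem hv, ?_⟩
    rw [← hvab]
    simp
  loopless := ⟨fun a h => h.1 rfl⟩

/-- The graph `G_C` on `[n]` attached to a subgroup `V ≤ S([n]²)`: distinct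
`a, b` are adjacent iff some `v ∈ V` maps some point of column `a` to a point
of column `b`. -/
def GC {n : ℕ} (V : Subgroup (Equiv.Perm (Fin n × Fin n))) : SimpleGraph (Fin n) where
  Adj a b := a ≠ b ∧ ∃ x y : Fin n, ∃ v ∈ V, v (x, a) = (y, b)
  symm := by
    constructor
    rintro a b ⟨hab, x, y, v, hv, hvab⟩
    refine ⟨hab.symm, y, x, v⁻¹, V.inv_mem hv, ?_⟩
    rw [← hvab]
    simp
  loopless := ⟨fun a h => h.1 rfl⟩

theorem stmt_15 (n : ℕ) (hn : 1 ≤ n)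
    (V : Subgroup (Equiv.Perm (Fin n × Fin n)))
    (hV : ∀ u ∈ V, ∀ v ∈ V, Compatible u v)
    (a b : Fin n) (hab : (GR V).Reachable a b) (c : Fin n)
    (v : Equiv.Perm (Fin n × Fin n)) (hv : v ∈ V) :
    (v (c, a)).1 = (v (c, b)).1 := by
  have key : ∀ a a' : Fin n, (GR V).Adj a a' → (v (c, a)).1 = (v (c, a')).1 := by
    rintro a a' ⟨hne, x, y, u, hu, hux⟩
    have hc := hV u hu v hv
    have h2 := Equiv.Perm.ext_iff.mp hc (c, a, x)
    simp only [Equiv.Perm.coe_mul, Function.comp_apply, tensorOne, oneTensor,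
      Equiv.permCongr_apply, Equiv.prodCongr_apply, Equiv.prodAssoc_symm_apply,
      Equiv.prodAssoc_apply, Prod.map, Equiv.refl_apply, hux] at h2
    exact (congrArg Prod.fst h2).symm
  obtain ⟨w⟩ := hab
  induction w with
  | nil => rfl
  | cons h _ ih => exact (key _ _ h).trans ih
end
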